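/- Let Γ be a countable discrete group with a proper length function ℓ and balls B_k := {γ ∈ Γ : ℓ(γ) ≤ k}, and let ρ : Γ ↷ (X,ν) be a measurable measure-class-preserving action on a σ-finite measure space. If Y ⊆ X is a domain of asymptotic expansion, then Y admits an exhaustion Y_n ↗ Y by domains Y_n of Markov S⁽ⁿ⁾-expansion (for suitable finite symmetric sets S⁽ⁿ⁾ ⊆ Γ containing the identity) such that for each n there is a constant Θ_n ≥ 1 with 1/Θ_n ≤ r(s,y) ≤ Θ_n for every y ∈ Y_n and every s ∈ S⁽ⁿ⁾ with s·y ∈ Y_n. -/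

import Mathlib

set_option linter.unusedSectionVars false
set_option maxHeartbeats 1600000


open MeasureTheory ENNReal Filter
open scoped Classical

noncomputable section

/-- The Radon–Nikodym derivative `r(γ,x) = d(γ⁻¹_*ν)/dν (x)` of a
measure-class-preserving action. -/
def rnd {Γ X : Type*} [Group Γ] [MulAction Γ X] [MeasurableSpace X]
    (ν : Measure X) (γ : Γ) (x : X) : ℝ≥0∞ :=
  Measure.rnDeriv (ν.map (fun y => γ⁻¹ • y)) ν x

/-- `σ_{Y,S}(x) = Σ_{s ∈ S, s·x ∈ Y} r(s,x)^{1/2}`. -/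
def sigmaLoc {Γ X : Type*} [Group Γ] [MulAction Γ X] [MeasurableSpace X]
    (ν : Measure X) (S : Finset Γ) (Y : Set X) (x : X) : ℝ≥0∞ :=
  ∑ s ∈ S, if s • x ∈ Y then (rnd ν s x) ^ (1/2 : ℝ) else 0

/-- The measure `ν̃_{Y,S}`, given by `dν̃_{Y,S} = σ_{Y,S} · d(ν|_Y)`. -/
def nuT {Γ X : Type*} [Group Γ] [MulAction Γ X] [MeasurableSpace X]
    (ν : Measure X) (S : Finset Γ) (Y : Set X) : Measure X :=
  (ν.restrict Y).withDensity (sigmaLoc ν S Y)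

/-- The normalised local Markov kernel
`Π_{Y,S}(x,·) = (1/σ_{Y,S}(x)) Σ_{s ∈ S, s·x ∈ Y} r(s,x)^{1/2} δ_{s·x}`. -/
def locKer {Γ X : Type*} [Group Γ] [MulAction Γ X] [MeasurableSpace X]
    (ν : Measure X) (S : Finset Γ) (Y : Set X) (x : X) : Measure X :=
  (sigmaLoc ν S Y x)⁻¹ •
    ∑ s ∈ S, (if s • x ∈ Y then (rnd ν s x) ^ (1/2 : ℝ) else 0) • Measure.dirac (s • x)

/-- The `ν̃_{Y,S}`-size of the boundary of `A ⊆ Y` with respect to `Π_{Y,S}`: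
`|∂ A| = ∫_A Π_{Y,S}(x, Y∖A) dν̃_{Y,S}(x)`. -/
def mkBdry {Γ X : Type*} [Group Γ] [MulAction Γ X] [MeasurableSpace X]
    (ν : Measure X) (S : Finset Γ) (Y A : Set X) : ℝ≥0∞ :=
  ∫⁻ x in A, locKer ν S Y x (Y \ A) ∂(nuT ν S Y)

/-- `Y` is a domain of Markov `S`-expansion: the Cheeger constant of the normalised local
Markov kernel `Π_{Y,S}` with respect to its reversing measure `ν̃_{Y,S}` is strictly
positive. -/
def MarkovSExpansion {Γ X : Type*} [Group Γ] [MulAction Γ X] [MeasurableSpace X]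
    (ν : Measure X) (S : Finset Γ) (Y : Set X) : Prop :=
  0 < sInf { q : ℝ≥0∞ | ∃ A : Set X, MeasurableSet A ∧ A ⊆ Y ∧ 0 < nuT ν S Y A ∧
    nuT ν S Y A ≤ nuT ν S Y Y / 2 ∧ q = mkBdry ν S Y A / nuT ν S Y A }

/-- `Y` is a domain of asymptotic expansion with respect to the proper length function
`ℓ`: there exist `c̲ : (0,1/2] → ℝ_{>0}` and `k̲ : (0,1/2] → ℕ` such that every
measurable `A ⊆ Y` with `α·ν(Y) ≤ ν(A) ≤ ν(Y)/2` satisfies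
`ν((B_{k̲(α)}·A) ∩ Y) > (1+c̲(α))·ν(A)`. -/
def DomainAsymptoticExpansion {Γ X : Type*} [Group Γ] [MulAction Γ X] [MeasurableSpace X]
    (ℓ : Γ → ℕ) (ν : Measure X) (Y : Set X) : Prop :=
  ∃ (c : ℝ → ℝ) (k : ℝ → ℕ), (∀ α ∈ Set.Ioc (0 : ℝ) (1/2), 0 < c α) ∧
    ∀ α ∈ Set.Ioc (0 : ℝ) (1/2), ∀ A : Set X, MeasurableSet A → A ⊆ Y →
      ENNReal.ofReal α * ν Y ≤ ν A → ν A ≤ ν Y / 2 →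
      (1 + ENNReal.ofReal (c α)) * ν A <
        ν ((⋃ γ ∈ {γ : Γ | ℓ γ ≤ k α}, (fun x => γ • x) '' A) ∩ Y)


namespace ExhAux

variable {Γ X : Type*} [Group Γ] [MulAction Γ X] [MeasurableSpace X]


variable {Γ X : Type*} [Group Γ] [MulAction Γ X] [MeasurableSpace X]

/-- expansion set: `S · A` -/
def ex (S : Finset Γ) (A : Set X) : Set X := ⋃ s ∈ S, (fun x => s • x) '' A

lemma image_smul_eq (s : Γ) (A : Set X) :
    (fun x => s • x) '' A = (fun x => s⁻¹ • x) ⁻¹' A := by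
  ext z
  constructor
  · rintro ⟨x, hx, rfl⟩; simpa [inv_smul_smul] using hx
  · intro hz; exact ⟨s⁻¹ • z, hz, by simp⟩

lemma measurableSet_image_smul (hmeas : ∀ γ : Γ, Measurable (fun x : X => γ • x))
    (s : Γ) {A : Set X} (hA : MeasurableSet A) :
    MeasurableSet ((fun x => s • x) '' A) := by
  rw [image_smul_eq]; exact (hmeas s⁻¹) hA

lemma measurableSet_ex (hmeas : ∀ γ : Γ, Measurable (fun x : X => γ • x))
    (S : Finset Γ) {A : Set X} (hA : MeasurableSet A) : MeasurableSet (ex S A) :=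
  MeasurableSet.biUnion S.countable_toSet (fun s _ => measurableSet_image_smul hmeas s hA)

lemma subset_ex {S : Finset Γ} (h1 : (1:Γ) ∈ S) (A : Set X) : A ⊆ ex S A := fun x hx =>
  Set.mem_biUnion h1 ⟨x, hx, one_smul _ _⟩

lemma ex_mono_right (S : Finset Γ) {A B : Set X} (h : A ⊆ B) : ex S A ⊆ ex S B :=
  Set.iUnion₂_mono fun _ _ => Set.image_mono h

lemma ex_mono_left {S T : Finset Γ} (h : S ⊆ T) (A : Set X) : ex S A ⊆ ex T A :=
  Set.biUnion_subset_biUnion_left h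

lemma ex_iUnion_subset {S : Finset Γ} {ι : Type*} (A : ι → Set X) :
    ex S (⋃ i, A i) ⊆ ⋃ i, ex S (A i) := by
  intro z hz
  obtain ⟨s, hs, x, hx, rfl⟩ := by simpa [ex] using hz
  obtain ⟨i, hi⟩ := hx
  exact Set.mem_iUnion.2 ⟨i, Set.mem_biUnion hs ⟨x, hi, rfl⟩⟩

variable (ν : Measure X) [SigmaFinite ν]

/-- the action by `s` as a measurable equivalence -/
def smulEquiv (hmeas : ∀ γ : Γ, Measurable (fun x : X => γ • x)) (s : Γ) : X ≃ᵐ X where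
  toFun := fun x => s • x
  invFun := fun x => s⁻¹ • x
  left_inv := fun x => by simp
  right_inv := fun x => by simp
  measurable_toFun := hmeas s
  measurable_invFun := hmeas s⁻¹

lemma sigmaFinite_map (hmeas : ∀ γ : Γ, Measurable (fun x : X => γ • x)) (s : Γ) :
    SigmaFinite (ν.map (fun y => s⁻¹ • y)) := by
  have : (fun y : X => s⁻¹ • y) = ⇑(smulEquiv hmeas s⁻¹) := rfl
  rw [this]
  exact MeasurableEquiv.sigmaFinite_map _

lemma map_ac (hmcp : ∀ γ : Γ, Measure.QuasiMeasurePreserving (fun x : X => γ • x) ν ν)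
    (s : Γ) : ν.map (fun y => s⁻¹ • y) ≪ ν :=
  (hmcp s⁻¹).absolutelyContinuous

lemma ac_map (hmcp : ∀ γ : Γ, Measure.QuasiMeasurePreserving (fun x : X => γ • x) ν ν)
    (hmeas : ∀ γ : Γ, Measurable (fun x : X => γ • x)) (s : Γ) :
    ν ≪ ν.map (fun y => s⁻¹ • y) := by
  refine Measure.AbsolutelyContinuous.mk (fun F hF h0 => ?_)
  rw [Measure.map_apply (hmeas s⁻¹) hF] at h0
  have h2 := (hmcp s).preimage_null h0
  have : (fun x : X => s • x) ⁻¹' ((fun y : X => s⁻¹ • y) ⁻¹' F) = F := by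
    ext x; simp
  rwa [this] at h2

lemma map_eq_withDensity (hmeas : ∀ γ : Γ, Measurable (fun x : X => γ • x))
    (hmcp : ∀ γ : Γ, Measure.QuasiMeasurePreserving (fun x : X => γ • x) ν ν) (s : Γ) :
    ν.map (fun y => s⁻¹ • y) = ν.withDensity (rnd ν s) := by
  have := sigmaFinite_map ν hmeas s
  exact (Measure.withDensity_rnDeriv_eq _ _ (map_ac ν hmcp s)).symm

/-- fundamental identity : `ν (s • F) = ∫_F rnd ν s` -/
lemma meas_image (hmeas : ∀ γ : Γ, Measurable (fun x : X => γ • x))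
    (hmcp : ∀ γ : Γ, Measure.QuasiMeasurePreserving (fun x : X => γ • x) ν ν)
    (s : Γ) {F : Set X} (hF : MeasurableSet F) :
    ν ((fun x => s • x) '' F) = ∫⁻ x in F, rnd ν s x ∂ν := by
  rw [image_smul_eq]
  have h1 : ν ((fun x : X => s⁻¹ • x) ⁻¹' F) = (ν.map (fun y => s⁻¹ • y)) F :=
    (Measure.map_apply (hmeas s⁻¹) hF).symm
  rw [h1, map_eq_withDensity ν hmeas hmcp s, withDensity_apply _ hF]

lemma measurable_rnd (s : Γ) : Measurable (rnd ν s) := Measure.measurable_rnDeriv _ _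

lemma rnd_pos_ae (hmeas : ∀ γ : Γ, Measurable (fun x : X => γ • x))
    (hmcp : ∀ γ : Γ, Measure.QuasiMeasurePreserving (fun x : X => γ • x) ν ν) (s : Γ) :
    ∀ᵐ x ∂ν, 0 < rnd ν s x := by
  have := sigmaFinite_map ν hmeas s
  exact (ac_map ν hmcp hmeas s).ae_le (Measure.rnDeriv_pos (map_ac ν hmcp s))

lemma rnd_lt_top_ae (hmeas : ∀ γ : Γ, Measurable (fun x : X => γ • x)) (s : Γ) :
    ∀ᵐ x ∂ν, rnd ν s x < ⊤ := by
  have := sigmaFinite_map ν hmeas s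
  exact Measure.rnDeriv_lt_top _ _

lemma meas_image_le (hmeas : ∀ γ : Γ, Measurable (fun x : X => γ • x))
    (hmcp : ∀ γ : Γ, Measure.QuasiMeasurePreserving (fun x : X => γ • x) ν ν)
    (s : Γ) {F : Set X} (hF : MeasurableSet F) {Θ : ℝ≥0∞}
    (hgood : ∀ x ∈ F, rnd ν s x ≤ Θ) :
    ν ((fun x => s • x) '' F) ≤ Θ * ν F := by
  rw [meas_image ν hmeas hmcp s hF]
  calc ∫⁻ x in F, rnd ν s x ∂ν ≤ ∫⁻ _ in F, Θ ∂ν := setLIntegral_mono measurable_const hgood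
  _ = Θ * ν F := by rw [setLIntegral_const]

lemma le_meas_image (hmeas : ∀ γ : Γ, Measurable (fun x : X => γ • x))
    (hmcp : ∀ γ : Γ, Measure.QuasiMeasurePreserving (fun x : X => γ • x) ν ν)
    (s : Γ) {F : Set X} (hF : MeasurableSet F) {Θ : ℝ≥0∞}
    (hgood : ∀ x ∈ F, Θ ≤ rnd ν s x) :
    Θ * ν F ≤ ν ((fun x => s • x) '' F) := by
  rw [meas_image ν hmeas hmcp s hF]
  calc Θ * ν F = ∫⁻ _ in F, Θ ∂ν := by rw [setLIntegral_const]
  _ ≤ ∫⁻ x in F, rnd ν s x ∂ν := setLIntegral_mono (measurable_rnd ν s) hgood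

lemma rnd_one_ae : ∀ᵐ x ∂ν, rnd ν (1 : Γ) x = 1 := by
  have h : (fun y : X => (1:Γ)⁻¹ • y) = id := by funext y; simp
  have : ν.map (fun y : X => (1:Γ)⁻¹ • y) = ν := by rw [h, Measure.map_id]
  have h2 : rnd ν (1 : Γ) = Measure.rnDeriv ν ν := by
    unfold rnd; rw [this]
  rw [h2]
  exact Measure.rnDeriv_self ν


lemma ex_union (S : Finset Γ) (A B : Set X) : ex S (A ∪ B) = ex S A ∪ ex S B := by
  ext z; simp only [ex, Set.mem_iUnion, Set.image_union, Set.mem_union, Set.mem_image]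
  constructor
  · rintro ⟨s, hs, h | h⟩
    · exact Or.inl ⟨s, hs, h⟩
    · exact Or.inr ⟨s, hs, h⟩
  · rintro (⟨s, hs, h⟩ | ⟨s, hs, h⟩)
    · exact ⟨s, hs, Or.inl h⟩
    · exact ⟨s, hs, Or.inr h⟩

lemma ex_empty (S : Finset Γ) : ex S (∅ : Set X) = ∅ := by
  simp [ex]

/-- Uniform expansion of a domain `D`. -/
def UExp (ν : Measure X) (S : Finset Γ) (D : Set X) (c half : ℝ≥0∞) : Prop :=
  ∀ B : Set X, B ⊆ D → MeasurableSet B → ν B ≤ half → c * ν B ≤ ν ((ex S B ∩ D) \ B)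

lemma UExp_empty (ν : Measure X) (S : Finset Γ) (c half : ℝ≥0∞) :
    UExp ν S (∅ : Set X) c half := by
  intro B hB _ _
  have : B = ∅ := Set.subset_eq_empty hB rfl
  simp [this]

lemma UExp_mono_S (ν : Measure X) {S T : Finset Γ} (hST : S ⊆ T) {D : Set X} {c half : ℝ≥0∞}
    (h : UExp ν S D c half) : UExp ν T D c half := by
  intro B hBD hBm hBh
  refine (h B hBD hBm hBh).trans (measure_mono ?_)
  exact Set.diff_subset_diff_left (Set.inter_subset_inter_left _
    (Set.biUnion_subset_biUnion_left hST))

lemma le_inv_mul {a x y : ℝ≥0∞} (ha0 : a ≠ 0) (hat : a ≠ ⊤) (h : a * x ≤ y) :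
    x ≤ a⁻¹ * y := by
  calc x = a⁻¹ * (a * x) := by rw [← mul_assoc, ENNReal.inv_mul_cancel ha0 hat, one_mul]
  _ ≤ a⁻¹ * y := mul_le_mul_right h _

lemma inv4_add_inv4 : (4 : ℝ≥0∞)⁻¹ + 4⁻¹ = 2⁻¹ := by
  have h4 : (4 : ℝ≥0∞) = 2 * 2 := by norm_num
  have h : (4 : ℝ≥0∞)⁻¹ = 2⁻¹ * 2⁻¹ := by
    rw [h4, ENNReal.mul_inv (Or.inl (by norm_num)) (Or.inl (by norm_num))]
  rw [h, ← add_mul, ENNReal.inv_two_add_inv_two, one_mul]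

lemma quarter_add_quarter (a : ℝ≥0∞) : a / 4 + a / 4 = a / 2 := by
  rw [div_eq_mul_inv, div_eq_mul_inv, ← mul_add, inv4_add_inv4, ← div_eq_mul_inv]

lemma div_le_self' (a b : ℝ≥0∞) (hb : 1 ≤ b) : a / b ≤ a := by
  rw [div_eq_mul_inv]
  calc a * b⁻¹ ≤ a * 1 := mul_le_mul_right (ENNReal.inv_le_one.2 hb) a
  _ = a := mul_one a

/-- **Core greedy lemma**.  Inside a measurable `E ⊆ Y`, protecting an expanding `P`,
one can delete a set of measure at most `g` so that the rest expands uniformly. -/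
lemma stage (ν : Measure X)
    (Y : Set X) (hYfin : ν Y ≠ ⊤)
    (S : Finset Γ) (h1S : (1:Γ) ∈ S)
    (E : Set X) (hE : MeasurableSet E) (hEY : E ⊆ Y)
    (P : Set X) (hP : MeasurableSet P) (hPE : P ⊆ E)
    (cP : ℝ≥0∞) (hcP0 : 0 < cP) (hcP1 : cP ≤ 1)
    (hPexp : UExp ν S P cP (ν Y / 2))
    (g : ℝ≥0∞) (hg0 : 0 < g) (hg4 : g ≤ ν Y / 4)
    (cg : ℝ≥0∞) (hcg0 : 0 < cg) (hcg1 : cg ≤ 1)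
    (hbig : ∀ B : Set X, B ⊆ Y → MeasurableSet B → g ≤ ν B → ν B ≤ ν Y / 2 →
      (1 + cg) * ν B < ν (ex S B ∩ Y))
    (c4 : ℝ≥0∞) (hc40 : 0 < c4) (hc41 : c4 ≤ 1)
    (hmed : ∀ B : Set X, B ⊆ Y → MeasurableSet B → ν Y / 4 ≤ ν B → ν B ≤ ν Y / 2 →
      (1 + c4) * ν B < ν (ex S B ∩ Y))
    (hYE1 : ν (Y \ E) ≤ cg / 2 * g)
    (hYE2 : ν (Y \ E) + g ≤ c4 / 16 * ν Y) :
    ∃ D : Set X, MeasurableSet D ∧ P ⊆ D ∧ D ⊆ E ∧ ν (E \ D) ≤ g ∧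
      ∃ c₁ : ℝ≥0∞, 0 < c₁ ∧ c₁ ≤ 1 ∧ UExp ν S D c₁ (ν Y / 2) := by
  classical
  have hYEfin : ∀ W : Set X, W ⊆ Y → ν W ≠ ⊤ :=
    fun W hW => (lt_of_le_of_lt (measure_mono hW) (lt_top_iff_ne_top.2 hYfin)).ne
  -- the class of removable sets relative to a removed part `R`
  set Cl : Set X → Set X → Prop := fun R A =>
    MeasurableSet A ∧ A ⊆ E \ R ∧ A ∩ P = ∅ ∧ 0 < ν A ∧ ν A ≤ ν Y / 4 ∧
      ν ((ex S A ∩ (E \ R)) \ A) < cg / 2 * ν A with hCl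
  have pick_ex : ∀ R : Set X, ∃ A : Set X,
      (Cl R A ∨ A = ∅) ∧ (∀ B, Cl R B → ν B ≤ 2 * ν A) := by
    intro R
    by_cases hne : ∃ A, Cl R A
    · set M := sSup {m : ℝ≥0∞ | ∃ A, Cl R A ∧ m = ν A} with hM
      have hMle : M ≤ ν Y / 4 := sSup_le (by rintro m ⟨A, hA, rfl⟩; exact hA.2.2.2.2.1)
      have hMtop : M ≠ ⊤ := by
        refine ne_top_of_le_ne_top ?_ hMle
        exact ne_top_of_le_ne_top hYfin (div_le_self' _ _ (by norm_num))
      have hM0 : M ≠ 0 := by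
        obtain ⟨A, hA⟩ := hne
        intro h0
        have : ν A ≤ M := le_sSup ⟨A, hA, rfl⟩
        rw [h0] at this
        exact absurd (le_antisymm this (zero_le)) hA.2.2.2.1.ne'
      have : M / 2 < M := ENNReal.half_lt_self hM0 hMtop
      obtain ⟨m, ⟨A, hA, rfl⟩, hm⟩ := lt_sSup_iff.1 this
      refine ⟨A, Or.inl hA, fun B hB => ?_⟩
      have h1 : ν B ≤ M := le_sSup ⟨B, hB, rfl⟩
      have h2 : M ≤ 2 * ν A := by
        calc M = 2 * (M / 2) := by
              rw [ENNReal.mul_div_cancel' (by norm_num) (by norm_num)]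
        _ ≤ 2 * ν A := mul_le_mul_right hm.le _
      exact h1.trans h2
    · exact ⟨∅, Or.inr rfl, fun B hB => absurd ⟨B, hB⟩ hne⟩
  set pick : Set X → Set X := fun R => (pick_ex R).choose with hpick
  have pick_spec : ∀ R, (Cl R (pick R) ∨ pick R = ∅) ∧ (∀ B, Cl R B → ν B ≤ 2 * ν (pick R)) :=
    fun R => (pick_ex R).choose_spec
  -- the removal sequence
  set Rs : ℕ → Set X := fun i => Nat.rec ∅ (fun _ R => R ∪ pick R) i with hRs
  have Rs_zero : Rs 0 = ∅ := rfl
  have Rs_succ : ∀ i, Rs (i+1) = Rs i ∪ pick (Rs i) := fun i => rfl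
  set As : ℕ → Set X := fun i => pick (Rs i) with hAs
  have hAmeas : ∀ i, MeasurableSet (As i) := by
    intro i
    rcases (pick_spec (Rs i)).1 with h | h
    · exact h.1
    · have h' : As i = ∅ := h
      rw [h']; exact MeasurableSet.empty
  have hAsub : ∀ i, As i ⊆ E \ Rs i := by
    intro i
    rcases (pick_spec (Rs i)).1 with h | h
    · exact h.2.1
    · have h' : As i = ∅ := h
      rw [h']; exact Set.empty_subset _
  have hAP : ∀ i, As i ∩ P = ∅ := by
    intro i
    rcases (pick_spec (Rs i)).1 with h | h
    · exact h.2.2.1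
    · have h' : As i = ∅ := h
      rw [h']; simp
  have hAcap : ∀ i, ν (As i) ≤ ν Y / 4 := by
    intro i
    rcases (pick_spec (Rs i)).1 with h | h
    · exact h.2.2.2.2.1
    · have h' : As i = ∅ := h
      rw [h']; simp
  have hAbd : ∀ i, ν ((ex S (As i) ∩ (E \ Rs i)) \ As i) ≤ cg / 2 * ν (As i) := by
    intro i
    rcases (pick_spec (Rs i)).1 with h | h
    · exact h.2.2.2.2.2.le
    · have h' : As i = ∅ := h
      rw [h']; simp [ex_empty]
  have hRmeas : ∀ i, MeasurableSet (Rs i) := by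
    intro i; induction i with
    | zero => rw [Rs_zero]; exact MeasurableSet.empty
    | succ i ih => rw [Rs_succ]; exact ih.union (hAmeas i)
  have hRmono : Monotone Rs := by
    apply monotone_nat_of_le_succ
    intro i; rw [Rs_succ]; exact Set.subset_union_left
  have hRE : ∀ i, Rs i ⊆ E := by
    intro i; induction i with
    | zero => rw [Rs_zero]; exact Set.empty_subset _
    | succ i ih => rw [Rs_succ]; exact Set.union_subset ih ((hAsub i).trans Set.diff_subset)
  have hRP : ∀ i, Rs i ∩ P = ∅ := by
    intro i; induction i with
    | zero => simp [Rs_zero]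
    | succ i ih => rw [Rs_succ, Set.union_inter_distrib_right, ih, hAP]; simp
  have hdisjAR : ∀ i, Disjoint (Rs i) (As i) := by
    intro i
    rw [Set.disjoint_right]
    intro z hz
    exact ((hAsub i) hz).2
  have hRsum : ∀ i, ν (Rs i) = ∑ j ∈ Finset.range i, ν (As j) := by
    intro i; induction i with
    | zero => simp [Rs_zero]
    | succ i ih =>
      rw [Rs_succ, measure_union (hdisjAR i) (hAmeas i), ih, Finset.sum_range_succ]
  -- membership of `ex S (Rs i)`
  have exRs : ∀ i z, z ∈ ex S (Rs i) → ∃ j, j < i ∧ z ∈ ex S (As j) := by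
    intro i; induction i with
    | zero => intro z hz; rw [Rs_zero, ex_empty] at hz; exact absurd hz (Set.notMem_empty z)
    | succ i ih =>
      intro z hz
      rw [Rs_succ, ex_union] at hz
      rcases hz with hz | hz
      · obtain ⟨j, hj, hjz⟩ := ih z hz
        exact ⟨j, hj.trans (Nat.lt_succ_self i), hjz⟩
      · exact ⟨i, Nat.lt_succ_self i, hz⟩
  -- budget bound
  have hhalf : ν Y / 4 + ν Y / 4 = ν Y / 2 := quarter_add_quarter _
  have hbud : ∀ i, ν (Rs i) < g := by
    intro i; induction i with
    | zero => rw [Rs_zero]; simpa using hg0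
    | succ i ih =>
      by_contra hcon
      push_neg at hcon
      set U := Rs (i+1) with hU
      have hUE : U ⊆ E := by rw [hU]; exact hRE (i+1)
      have hUY : U ⊆ Y := hUE.trans hEY
      have hUm : MeasurableSet U := by rw [hU]; exact hRmeas (i+1)
      have hUle : ν U ≤ ν Y / 2 := by
        have : ν U ≤ ν (Rs i) + ν (As i) := by
          rw [hU, Rs_succ]; exact measure_union_le _ _
        refine this.trans ?_
        rw [← hhalf]
        exact add_le_add (ih.le.trans hg4) (hAcap i)
      have hlow := hbig U hUY hUm hcon hUle
      -- upper bound for `ν (ex S U ∩ Y)`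
      have hincl : ex S U ∩ Y ⊆ (Y \ E) ∪ U ∪
          ⋃ j ∈ Finset.range (i+1), ((ex S (As j) ∩ (E \ Rs j)) \ As j) := by
        rintro z ⟨hz1, hz2⟩
        by_cases hzE : z ∈ E
        · by_cases hzU : z ∈ U
          · exact Or.inl (Or.inr hzU)
          · obtain ⟨j, hj, hjz⟩ := exRs (i+1) z hz1
            refine Or.inr (Set.mem_biUnion (Finset.mem_range.2 hj) ?_)
            refine ⟨⟨hjz, hzE, fun hzR => hzU (hRmono hj.le hzR)⟩, fun hzA => ?_⟩
            refine hzU ?_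
            have hsub : As j ⊆ Rs (j+1) := by rw [Rs_succ]; exact Set.subset_union_right
            exact hRmono (Nat.succ_le_of_lt hj) (hsub hzA)
        · exact Or.inl (Or.inl ⟨hz2, hzE⟩)
      have hup : ν (ex S U ∩ Y) ≤ ν (Y \ E) + ν U + cg / 2 * ν U := by
        refine (measure_mono hincl).trans ?_
        refine (measure_union_le _ _).trans ?_
        refine add_le_add (measure_union_le _ _) ?_
        refine (measure_biUnion_finset_le _ _).trans ?_
        calc ∑ j ∈ Finset.range (i+1), ν ((ex S (As j) ∩ (E \ Rs j)) \ As j)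
            ≤ ∑ j ∈ Finset.range (i+1), cg / 2 * ν (As j) :=
              Finset.sum_le_sum fun j _ => hAbd j
        _ = cg / 2 * ν U := by rw [← Finset.mul_sum, ← hRsum]
      have hfinal : ν (ex S U ∩ Y) ≤ (1 + cg) * ν U := by
        refine hup.trans ?_
        have h1 : ν (Y \ E) ≤ cg / 2 * ν U := hYE1.trans (mul_le_mul_right hcon _)
        calc ν (Y \ E) + ν U + cg / 2 * ν U ≤ cg / 2 * ν U + ν U + cg / 2 * ν U :=
              add_le_add (add_le_add h1 le_rfl) le_rfl
        _ = ν U + (cg / 2 + cg / 2) * ν U := by ring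
        _ = (1 + cg) * ν U := by rw [ENNReal.add_halves]; ring
      exact absurd (hlow.trans_le hfinal) (lt_irrefl _)
  -- the removed set and the domain
  set Rw : Set X := ⋃ i, Rs i with hRw
  have hRwm : MeasurableSet Rw := MeasurableSet.iUnion hRmeas
  have hRwle : ν Rw ≤ g := by
    rw [hRw, Directed.measure_iUnion (hRmono.directed_le)]
    exact iSup_le fun i => (hbud i).le
  set D : Set X := E \ Rw with hD
  have hDm : MeasurableSet D := hE.diff hRwm
  have hPD : P ⊆ D := by
    intro z hz
    refine ⟨hPE hz, fun hzR => ?_⟩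
    obtain ⟨i, hi⟩ := Set.mem_iUnion.1 hzR
    have : z ∈ Rs i ∩ P := ⟨hi, hz⟩
    rw [hRP i] at this
    exact this
  have hDE : D ⊆ E := Set.diff_subset
  have hED : ν (E \ D) ≤ g := by
    refine le_trans (measure_mono ?_) hRwle
    intro z hz
    rcases Classical.em (z ∈ Rw) with h | h
    · exact h
    · exact absurd ⟨hz.1, h⟩ hz.2
  -- `Rw = ⋃ As`
  have hRwA : Rw = ⋃ i, As i := by
    apply Set.Subset.antisymm
    · refine Set.iUnion_subset fun i => ?_
      induction i with
      | zero => rw [Rs_zero]; exact Set.empty_subset _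
      | succ i ih =>
        rw [Rs_succ]
        exact Set.union_subset ih (Set.subset_iUnion As i)
    · refine Set.iUnion_subset fun i => ?_
      have : As i ⊆ Rs (i+1) := by rw [Rs_succ]; exact Set.subset_union_right
      exact this.trans (Set.subset_iUnion Rs (i+1))
  have hAdisj : Pairwise (Function.onFun Disjoint As) := by
    intro i j hij
    rcases lt_or_gt_of_ne hij with h | h
    · have h1 : As i ⊆ Rs j := by
        have : As i ⊆ Rs (i+1) := by rw [Rs_succ]; exact Set.subset_union_right
        exact this.trans (hRmono h)
      rw [Function.onFun, Set.disjoint_right]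
      intro z hz
      exact fun hz2 => ((hAsub j) hz).2 (h1 hz2)
    · have h1 : As j ⊆ Rs i := by
        have : As j ⊆ Rs (j+1) := by rw [Rs_succ]; exact Set.subset_union_right
        exact this.trans (hRmono h)
      rw [Function.onFun, Set.disjoint_left]
      intro z hz
      exact fun hz2 => ((hAsub i) hz).2 (h1 hz2)
  have hRwfin : ν Rw ≠ ⊤ :=
    ne_top_of_le_ne_top (ne_top_of_le_ne_top hYfin (div_le_self' _ _ (by norm_num)))
      (hRwle.trans hg4)
  have hAtsum : ∑' i, ν (As i) ≠ ⊤ := by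
    rw [← measure_iUnion hAdisj hAmeas, ← hRwA]
    exact hRwfin
  have hAtend : Tendsto (fun i => ν (As i)) atTop (nhds 0) :=
    ENNReal.tendsto_atTop_zero_of_tsum_ne_top hAtsum
  -- the key null property
  have hnull : ∀ B : Set X, B ⊆ D → B ∩ P = ∅ → MeasurableSet B → ν B ≤ ν Y / 4 →
      cg / 4 * ν B ≤ ν ((ex S B ∩ D) \ B) := by
    intro B hBD hBP hBm hBcap
    by_contra hlt
    push_neg at hlt
    have hB0 : 0 < ν B := by
      by_contra h0
      push_neg at h0
      have : ν B = 0 := le_antisymm h0 (zero_le)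
      rw [this, mul_zero] at hlt
      exact absurd hlt (by simp)
    set δ := cg / 4 * ν B with hδ
    have hδ0 : δ ≠ 0 := by
      rw [hδ]
      exact mul_ne_zero (ENNReal.div_ne_zero.2 ⟨hcg0.ne', by norm_num⟩) hB0.ne'
    -- find i with ν (Rw \ Rs i) < δ
    have hex : ∃ i, ν (Rw \ Rs i) < δ := by
      by_contra hcon
      push_neg at hcon
      have h1 : ∀ i, ν (Rs i) + δ ≤ ν Rw := by
        intro i
        have hsplit : ν Rw = ν (Rs i) + ν (Rw \ Rs i) := by
          rw [← measure_union (disjoint_sdiff_self_right) ((hRwm).diff (hRmeas i))]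
          congr 1
          rw [Set.union_diff_cancel]
          exact (Set.subset_iUnion Rs i)
        rw [hsplit]
        exact add_le_add le_rfl (hcon i)
      have h2 : ν Rw + δ ≤ ν Rw := by
        have h3 : ν Rw = ⨆ i, ν (Rs i) := by
          rw [hRw, Directed.measure_iUnion (hRmono.directed_le)]
        rw [h3, ENNReal.iSup_add]
        exact iSup_le fun i => by rw [← h3]; exact h1 i
      have h2' : ν Rw + δ ≤ ν Rw + 0 := by simpa using h2
      have := (ENNReal.add_le_add_iff_left hRwfin).1 h2'
      simp only [nonpos_iff_eq_zero] at this
      exact hδ0 this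
    obtain ⟨i₀, hi₀⟩ := hex
    -- B is in the class at every stage j ≥ i₀
    have hBC : ∀ j, i₀ ≤ j → Cl (Rs j) B := by
      intro j hj
      have hRj : ν (Rw \ Rs j) < δ :=
        lt_of_le_of_lt (measure_mono (Set.diff_subset_diff_right (hRmono hj))) hi₀
      refine ⟨hBm, ?_, hBP, hB0, hBcap, ?_⟩
      · intro z hz
        exact ⟨(hBD hz).1, fun hzR => (hBD hz).2 (Set.mem_iUnion.2 ⟨j, hzR⟩)⟩
      · -- boundary estimate
        have hincl : (ex S B ∩ (E \ Rs j)) \ B ⊆ ((ex S B ∩ D) \ B) ∪ (Rw \ Rs j) := by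
          rintro z ⟨⟨hz1, hz2, hz3⟩, hz4⟩
          by_cases hzR : z ∈ Rw
          · exact Or.inr ⟨hzR, hz3⟩
          · exact Or.inl ⟨⟨hz1, hz2, hzR⟩, hz4⟩
        have hδtop : δ ≠ ⊤ := by
          rw [hδ]
          exact ENNReal.mul_ne_top (ne_top_of_le_ne_top (by norm_num : (1:ℝ≥0∞) ≠ ⊤)
            ((div_le_self' cg 4 (by norm_num)).trans hcg1))
            (hYEfin B (hBD.trans (hDE.trans hEY)))
        have hb1 : ν ((ex S B ∩ D) \ B) < δ := hlt
        have hstep : ν (((ex S B ∩ D) \ B)) + ν (Rw \ Rs j) < δ + δ := by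
          have := ENNReal.add_lt_add_right hδtop hb1
          calc ν (((ex S B ∩ D) \ B)) + ν (Rw \ Rs j)
              ≤ ν (((ex S B ∩ D) \ B)) + δ := add_le_add le_rfl hRj.le
          _ < δ + δ := ENNReal.add_lt_add_right hδtop hb1
        calc ν ((ex S B ∩ (E \ Rs j)) \ B)
            ≤ ν (((ex S B ∩ D) \ B)) + ν (Rw \ Rs j) :=
              (measure_mono hincl).trans (measure_union_le _ _)
        _ < δ + δ := hstep
        _ = cg / 2 * ν B := by
              rw [hδ, ← add_mul, ← quarter_add_quarter cg]
    have hBA : ∀ j, i₀ ≤ j → ν B ≤ 2 * ν (As j) := by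
      intro j hj
      exact (pick_spec (Rs j)).2 B (hBC j hj)
    have h2A : Tendsto (fun j => 2 * ν (As j)) atTop (nhds 0) := by
      have := ENNReal.Tendsto.const_mul hAtend (Or.inr (by norm_num : (2:ℝ≥0∞) ≠ ⊤))
      simpa using this
    have : ν B ≤ 0 := ge_of_tendsto h2A (eventually_atTop.2 ⟨i₀, fun j hj => hBA j hj⟩)
    exact absurd (le_antisymm this (zero_le)) hB0.ne'
  -- final uniform expansion constant
  set K : ℝ≥0∞ := (c4 / 2)⁻¹ + (cP⁻¹ + (cg / 4)⁻¹ * (1 + cP⁻¹)) with hK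
  have hcPt : cP ≠ ⊤ := ne_top_of_le_ne_top (by norm_num) hcP1
  have hc4half : c4 / 2 ≠ 0 := by
    simp only [ne_eq, ENNReal.div_eq_zero_iff, not_or]
    exact ⟨hc40.ne', by norm_num⟩
  have hcg4 : cg / 4 ≠ 0 := by
    simp only [ne_eq, ENNReal.div_eq_zero_iff, not_or]
    exact ⟨hcg0.ne', by norm_num⟩
  have hKfin : K ≠ ⊤ := by
    rw [hK]
    refine ENNReal.add_ne_top.2 ⟨ENNReal.inv_ne_top.2 hc4half, ENNReal.add_ne_top.2
      ⟨ENNReal.inv_ne_top.2 hcP0.ne', ENNReal.mul_ne_top (ENNReal.inv_ne_top.2 hcg4)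
        (ENNReal.add_ne_top.2 ⟨by norm_num, ENNReal.inv_ne_top.2 hcP0.ne'⟩)⟩⟩
  have hK1 : 1 ≤ K := by
    have h1 : (1:ℝ≥0∞) ≤ cP⁻¹ := ENNReal.one_le_inv.2 hcP1
    refine h1.trans ?_
    rw [hK]
    exact le_add_self.trans' le_self_add
  have hK0 : K ≠ 0 := by
    intro h
    rw [h] at hK1
    exact one_ne_zero (le_antisymm hK1 (zero_le))
  refine ⟨D, hDm, hPD, hDE, hED, K⁻¹, ENNReal.inv_pos.2 hKfin, ENNReal.inv_le_one.2 hK1, ?_⟩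
  intro B hBD hBm hBhalf
  set bd := ν ((ex S B ∩ D) \ B) with hbd
  have hBY : B ⊆ Y := hBD.trans (hDE.trans hEY)
  have hBfin : ν B ≠ ⊤ := hYEfin B hBY
  have key : ν B ≤ K * bd := by
    by_cases hq : ν Y / 4 < ν (B \ P)
    · -- medium case
      have hB4 : ν Y / 4 ≤ ν B := hq.le.trans (measure_mono Set.diff_subset)
      have hmedB := hmed B hBY hBm hB4 hBhalf
      have hsplit : ν (ex S B ∩ Y) ≤ ν B + ν ((ex S B ∩ Y) \ B) := by
        refine (measure_mono (fun z hz => ?_)).trans (measure_union_le _ _)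
        by_cases hzB : z ∈ B
        · exact Or.inl hzB
        · exact Or.inr ⟨hz, hzB⟩
      have h1 : ν B + c4 * ν B < ν B + ν ((ex S B ∩ Y) \ B) := by
        calc ν B + c4 * ν B = (1 + c4) * ν B := by ring
        _ < ν (ex S B ∩ Y) := hmedB
        _ ≤ ν B + ν ((ex S B ∩ Y) \ B) := hsplit
      have h2 : c4 * ν B < ν ((ex S B ∩ Y) \ B) :=
        (ENNReal.add_lt_add_iff_left hBfin).1 h1
      have hincl2 : (ex S B ∩ Y) \ B ⊆ ((ex S B ∩ D) \ B) ∪ (Y \ D) := by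
        rintro z ⟨⟨hz1, hz2⟩, hz3⟩
        by_cases hzD : z ∈ D
        · exact Or.inl ⟨⟨hz1, hzD⟩, hz3⟩
        · exact Or.inr ⟨hz2, hzD⟩
      have hYD : ν (Y \ D) ≤ c4 / 16 * ν Y := by
        have : Y \ D ⊆ (Y \ E) ∪ (E \ D) := by
          rintro z ⟨hz1, hz2⟩
          by_cases hzE : z ∈ E
          · exact Or.inr ⟨hzE, hz2⟩
          · exact Or.inl ⟨hz1, hzE⟩
        refine (measure_mono this).trans ((measure_union_le _ _).trans ?_)
        exact (add_le_add le_rfl hED).trans hYE2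
      have hY4B : ν Y ≤ 4 * ν B := by
        calc ν Y = ν Y / 4 * 4 := (ENNReal.div_mul_cancel (by norm_num) (by norm_num)).symm
        _ ≤ ν B * 4 := mul_le_mul_left hB4 _
        _ = 4 * ν B := mul_comm _ _
      have hYD2 : ν (Y \ D) ≤ c4 / 4 * ν B := by
        refine hYD.trans ?_
        calc c4 / 16 * ν Y ≤ c4 / 16 * (4 * ν B) := mul_le_mul_right hY4B _
        _ = c4 / 4 * ν B := by
            rw [div_eq_mul_inv, div_eq_mul_inv]
            have h16 : (16 : ℝ≥0∞)⁻¹ * 4 = 4⁻¹ := by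
              have : (16 : ℝ≥0∞) = 4 * 4 := by norm_num
              rw [this, ENNReal.mul_inv (Or.inl (by norm_num)) (Or.inl (by norm_num)),
                mul_assoc, ENNReal.inv_mul_cancel (by norm_num) (by norm_num), mul_one]
            calc c4 * 16⁻¹ * (4 * ν B) = c4 * (16⁻¹ * 4) * ν B := by ring
            _ = c4 * 4⁻¹ * ν B := by rw [h16]
      have h3 : c4 * ν B < bd + c4 / 4 * ν B := by
        refine h2.trans_le ?_
        refine (measure_mono hincl2).trans ((measure_union_le _ _).trans ?_)
        exact add_le_add le_rfl hYD2
      have hc4top : c4 / 4 * ν B ≠ ⊤ :=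
        ENNReal.mul_ne_top (ne_top_of_le_ne_top (by norm_num : (1:ℝ≥0∞) ≠ ⊤)
          ((div_le_self' c4 4 (by norm_num)).trans hc41)) hBfin
      have h4 : c4 / 2 * ν B ≤ bd := by
        have hsum : c4 * ν B = (c4 / 2 * ν B + c4 / 4 * ν B) + c4 / 4 * ν B := by
          have : c4 = (c4 / 2 + c4 / 4) + c4 / 4 := by
            rw [add_assoc, quarter_add_quarter, ENNReal.add_halves]
          calc c4 * ν B = ((c4 / 2 + c4 / 4) + c4 / 4) * ν B := by rw [← this]
          _ = (c4 / 2 * ν B + c4 / 4 * ν B) + c4 / 4 * ν B := by ring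
        rw [hsum] at h3
        have h5 := (ENNReal.add_lt_add_iff_right hc4top).1 h3
        calc c4 / 2 * ν B ≤ c4 / 2 * ν B + c4 / 4 * ν B := le_self_add
        _ ≤ bd := h5.le
      have h6 : ν B ≤ (c4 / 2)⁻¹ * bd :=
        le_inv_mul hc4half (ne_top_of_le_ne_top (by norm_num : (1:ℝ≥0∞) ≠ ⊤)
          ((div_le_self' c4 2 (by norm_num)).trans hc41)) h4
      refine h6.trans (mul_le_mul_left ?_ _)
      rw [hK]; exact le_self_add
    · -- small case
      push_neg at hq
      set p := ν (B ∩ P) with hp'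
      set q := ν (B \ P) with hq'
      have hpP : B ∩ P ⊆ P := Set.inter_subset_right
      have hphalf : p ≤ ν Y / 2 := (measure_mono Set.inter_subset_left).trans hBhalf
      have hpexp := hPexp (B ∩ P) hpP (hBm.inter hP) hphalf
      have hpincl : (ex S (B ∩ P) ∩ P) \ (B ∩ P) ⊆ (ex S B ∩ D) \ B := by
        rintro z ⟨⟨hz1, hz2⟩, hz3⟩
        refine ⟨⟨ex_mono_right S Set.inter_subset_left hz1, hPD hz2⟩, fun hzB => ?_⟩
        exact hz3 ⟨hzB, hz2⟩
      have hpbd : cP * p ≤ bd := hpexp.trans (measure_mono hpincl)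
      have hqnull := hnull (B \ P) (Set.diff_subset.trans hBD)
        (by ext z; simp (config := { contextual := true }) [Set.mem_diff])
        (hBm.diff hP) hq
      have hqincl : (ex S (B \ P) ∩ D) \ (B \ P) ⊆ ((ex S B ∩ D) \ B) ∪ (B ∩ P) := by
        rintro z ⟨⟨hz1, hz2⟩, hz3⟩
        by_cases hzB : z ∈ B
        · refine Or.inr ⟨hzB, ?_⟩
          by_contra hzP
          exact hz3 ⟨hzB, hzP⟩
        · exact Or.inl ⟨⟨ex_mono_right S Set.diff_subset hz1, hz2⟩, hzB⟩
      have hqbd : cg / 4 * q ≤ bd + p :=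
        hqnull.trans ((measure_mono hqincl).trans (measure_union_le _ _))
      have hple : p ≤ cP⁻¹ * bd := le_inv_mul hcP0.ne' hcPt hpbd
      have hqle : q ≤ (cg / 4)⁻¹ * ((1 + cP⁻¹) * bd) := by
        have hcg4t : cg / 4 ≠ ⊤ := ne_top_of_le_ne_top (by norm_num : (1:ℝ≥0∞) ≠ ⊤)
          ((div_le_self' cg 4 (by norm_num)).trans hcg1)
        refine (le_inv_mul hcg4 hcg4t hqbd).trans (mul_le_mul_right ?_ _)
        calc bd + p ≤ bd + cP⁻¹ * bd := add_le_add le_rfl hple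
        _ = (1 + cP⁻¹) * bd := by ring
      have hBpq : ν B ≤ p + q := by
        conv_lhs => rw [show B = (B ∩ P) ∪ (B \ P) from (Set.inter_union_diff B P).symm]
        exact measure_union_le _ _
      calc ν B ≤ p + q := hBpq
      _ ≤ cP⁻¹ * bd + (cg / 4)⁻¹ * ((1 + cP⁻¹) * bd) := add_le_add hple hqle
      _ = (cP⁻¹ + (cg / 4)⁻¹ * (1 + cP⁻¹)) * bd := by ring
      _ ≤ K * bd := by
          refine mul_le_mul_left ?_ _
          rw [hK]; exact le_add_self
  calc K⁻¹ * ν B ≤ K⁻¹ * (K * bd) := mul_le_mul_right key _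
  _ = bd := by rw [← mul_assoc, ENNReal.inv_mul_cancel hK0 hKfin, one_mul]



section Markov

variable (hmeas : ∀ γ : Γ, Measurable (fun x : X => γ • x))
  (hmcp : ∀ γ : Γ, Measure.QuasiMeasurePreserving (fun x : X => γ • x) ν ν)
  (S : Finset Γ) (Θ : ℝ≥0∞) (D : Set X)

/-- rnd to the 1/2 power, bounded below -/
lemma rnd_half_lb (hΘ1 : 1 ≤ Θ) {x : X} {s : Γ} (h : Θ⁻¹ ≤ rnd ν s x) :
    Θ⁻¹ ≤ (rnd ν s x) ^ (1/2 : ℝ) := by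
  have hle1 : (Θ⁻¹ : ℝ≥0∞) ^ (1/2 : ℝ) ≤ (rnd ν s x) ^ (1/2 : ℝ) :=
    ENNReal.rpow_le_rpow h (by norm_num)
  refine le_trans ?_ hle1
  calc Θ⁻¹ = Θ⁻¹ ^ (1:ℝ) := (ENNReal.rpow_one _).symm
  _ ≤ Θ⁻¹ ^ (1/2:ℝ) := ENNReal.rpow_le_rpow_of_exponent_ge
      (ENNReal.inv_le_one.2 hΘ1) (by norm_num)

lemma rnd_half_ub (hΘ1 : 1 ≤ Θ) {x : X} {s : Γ} (h : rnd ν s x ≤ Θ) :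
    (rnd ν s x) ^ (1/2 : ℝ) ≤ Θ := by
  calc (rnd ν s x) ^ (1/2 : ℝ) ≤ Θ ^ (1/2 : ℝ) := ENNReal.rpow_le_rpow h (by norm_num)
  _ ≤ Θ ^ (1:ℝ) := ENNReal.rpow_le_rpow_of_exponent_le hΘ1 (by norm_num)
  _ = Θ := ENNReal.rpow_one _

lemma sigma_lb (hgood : ∀ x ∈ D, ∀ s ∈ S, Θ⁻¹ ≤ rnd ν s x ∧ rnd ν s x ≤ Θ)
    (h1S : (1:Γ) ∈ S) (hΘ1 : 1 ≤ Θ) : ∀ x ∈ D, Θ⁻¹ ≤ sigmaLoc ν S D x := by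
  intro x hx
  have h1 : (if (1:Γ) • x ∈ D then (rnd ν (1:Γ) x) ^ (1/2 : ℝ) else 0) ≤ sigmaLoc ν S D x :=
    Finset.single_le_sum (f := fun s => if s • x ∈ D then (rnd ν s x) ^ (1/2 : ℝ) else 0)
      (fun i _ => zero_le) h1S
  refine le_trans ?_ h1
  rw [if_pos (by rwa [one_smul])]
  exact rnd_half_lb ν Θ hΘ1 ((hgood x hx 1 h1S).1)

lemma sigma_ub (hgood : ∀ x ∈ D, ∀ s ∈ S, Θ⁻¹ ≤ rnd ν s x ∧ rnd ν s x ≤ Θ)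
    (hΘ1 : 1 ≤ Θ) : ∀ x ∈ D, sigmaLoc ν S D x ≤ (S.card : ℝ≥0∞) * Θ := by
  intro x hx
  have h1 : sigmaLoc ν S D x ≤ S.card • Θ := by
    refine Finset.sum_le_card_nsmul _ _ _ (fun s hs => ?_)
    by_cases h : s • x ∈ D
    · rw [if_pos h]
      exact rnd_half_ub ν Θ hΘ1 ((hgood x hx s hs).2)
    · rw [if_neg h]; exact zero_le
  simpa [nsmul_eq_mul] using h1

lemma sigma_meas (hDm : MeasurableSet D) (hmeas : ∀ γ : Γ, Measurable (fun x : X => γ • x)) :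
    Measurable (sigmaLoc ν S D) := by
  refine Finset.measurable_sum _ (fun s _ => ?_)
  refine Measurable.ite ?_ ((measurable_rnd ν s).pow_const _) measurable_const
  exact (hmeas s) hDm

lemma nuT_apply {A : Set X} (hA : MeasurableSet A) (hAD : A ⊆ D) :
    nuT ν S D A = ∫⁻ x in A, sigmaLoc ν S D x ∂ν := by
  rw [nuT, withDensity_apply _ hA, Measure.restrict_restrict hA,
    Set.inter_eq_self_of_subset_left hAD]

lemma nuT_ub (hgood : ∀ x ∈ D, ∀ s ∈ S, Θ⁻¹ ≤ rnd ν s x ∧ rnd ν s x ≤ Θ)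
    (hΘ1 : 1 ≤ Θ) {A : Set X} (hA : MeasurableSet A) (hAD : A ⊆ D) :
    nuT ν S D A ≤ (S.card : ℝ≥0∞) * Θ * ν A := by
  rw [nuT_apply ν S D hA hAD]
  calc ∫⁻ x in A, sigmaLoc ν S D x ∂ν ≤ ∫⁻ _ in A, (S.card : ℝ≥0∞) * Θ ∂ν :=
        setLIntegral_mono measurable_const
          (fun x hx => sigma_ub ν S Θ D hgood hΘ1 x (hAD hx))

  _ = (S.card : ℝ≥0∞) * Θ * ν A := by rw [setLIntegral_const]

lemma nuT_lb (hgood : ∀ x ∈ D, ∀ s ∈ S, Θ⁻¹ ≤ rnd ν s x ∧ rnd ν s x ≤ Θ)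
    (h1S : (1:Γ) ∈ S) (hΘ1 : 1 ≤ Θ) (hDm : MeasurableSet D)
    (hmeas : ∀ γ : Γ, Measurable (fun x : X => γ • x))
    {A : Set X} (hA : MeasurableSet A) (hAD : A ⊆ D) :
    Θ⁻¹ * ν A ≤ nuT ν S D A := by
  rw [nuT_apply ν S D hA hAD]
  calc Θ⁻¹ * ν A = ∫⁻ _ in A, Θ⁻¹ ∂ν := by rw [setLIntegral_const]
  _ ≤ ∫⁻ x in A, sigmaLoc ν S D x ∂ν :=
      setLIntegral_mono (sigma_meas ν S D hDm hmeas)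
        (fun x hx => sigma_lb ν S Θ D hgood h1S hΘ1 x (hAD hx))

lemma locKer_apply (x : X) {C : Set X} (hC : MeasurableSet C) :
    locKer ν S D x C = (sigmaLoc ν S D x)⁻¹ *
      ∑ s ∈ S, (if s • x ∈ D then (rnd ν s x) ^ (1/2 : ℝ) else 0) * C.indicator 1 (s • x) := by
  rw [locKer, Measure.smul_apply, Measure.finset_sum_apply, smul_eq_mul]
  congr 1
  refine Finset.sum_congr rfl (fun s _ => ?_)
  rw [Measure.smul_apply, smul_eq_mul, Measure.dirac_apply' _ hC]

lemma mkBdry_ge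
    (hmeas : ∀ γ : Γ, Measurable (fun x : X => γ • x))
    (hgood : ∀ x ∈ D, ∀ s ∈ S, Θ⁻¹ ≤ rnd ν s x ∧ rnd ν s x ≤ Θ)
    (h1S : (1:Γ) ∈ S) (hΘ1 : 1 ≤ Θ) (hΘt : Θ ≠ ⊤) (hDm : MeasurableSet D)
    {A : Set X} (hA : MeasurableSet A) (hAD : A ⊆ D) :
    Θ⁻¹ * ∑ s ∈ S, ν (A ∩ (fun x => s • x) ⁻¹' (D \ A)) ≤ mkBdry ν S D A := by
  have hDA : MeasurableSet (D \ A) := hDm.diff hA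
  set T : X → ℝ≥0∞ := fun x =>
    ∑ s ∈ S, (if s • x ∈ D then (rnd ν s x) ^ (1/2 : ℝ) else 0) *
      (D \ A).indicator 1 (s • x) with hT
  have hindm : ∀ s : Γ, Measurable (fun x : X => (D \ A).indicator (1 : X → ℝ≥0∞) (s • x)) := by
    intro s
    have heq : (fun x : X => (D \ A).indicator (1 : X → ℝ≥0∞) (s • x))
        = fun x : X => ((fun x : X => s • x) ⁻¹' (D \ A)).indicator (fun _ => (1:ℝ≥0∞)) x := by
      funext x
      simp [Set.indicator_apply, Set.mem_preimage]
    rw [heq]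
    exact Measurable.indicator measurable_const ((hmeas s) hDA)
  have hTmeas : Measurable T := by
    refine Finset.measurable_sum _ (fun s _ => Measurable.mul ?_ (hindm s))
    exact Measurable.ite ((hmeas s) hDm) ((measurable_rnd ν s).pow_const _) measurable_const
  have hσm : Measurable (sigmaLoc ν S D) := sigma_meas ν S D hDm hmeas
  have hgm : Measurable (fun x => locKer ν S D x (D \ A)) := by
    have heq : (fun x => locKer ν S D x (D \ A))
        = fun x => (sigmaLoc ν S D x)⁻¹ * T x := by
      funext x; exact locKer_apply ν S D x hDA
    rw [heq]
    exact (hσm.inv).mul hTmeas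
  have h1 : mkBdry ν S D A
      = ∫⁻ x in A, sigmaLoc ν S D x * ((sigmaLoc ν S D x)⁻¹ * T x) ∂(ν.restrict D) := by
    rw [mkBdry, nuT, setLIntegral_withDensity_eq_setLIntegral_mul _ hσm hgm hA]
    refine lintegral_congr (fun x => ?_)
    rw [Pi.mul_apply, locKer_apply ν S D x hDA]
  have h2 : mkBdry ν S D A = ∫⁻ x in A, T x ∂ν := by
    rw [h1, Measure.restrict_restrict hA, Set.inter_eq_self_of_subset_left hAD]
    refine setLIntegral_congr_fun hA (fun x hx => ?_)
    have hσ0 : sigmaLoc ν S D x ≠ 0 := by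
      refine fun h0 => ?_
      have := sigma_lb ν S Θ D hgood h1S hΘ1 x (hAD hx)
      rw [h0] at this
      exact (ENNReal.inv_ne_zero.2 hΘt) (le_antisymm this (zero_le))
    have hσt : sigmaLoc ν S D x ≠ ⊤ :=
      ne_top_of_le_ne_top (ENNReal.mul_ne_top (ENNReal.natCast_ne_top _) hΘt)
        (sigma_ub ν S Θ D hgood hΘ1 x (hAD hx))
    rw [← mul_assoc, ENNReal.mul_inv_cancel hσ0 hσt, one_mul]
  rw [h2]
  have h3 : ∀ x ∈ A, ∑ s ∈ S, Θ⁻¹ *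
      ((fun x : X => s • x) ⁻¹' (D \ A)).indicator (fun _ => (1:ℝ≥0∞)) x ≤ T x := by
    intro x hx
    refine Finset.sum_le_sum (fun s hs => ?_)
    by_cases h : s • x ∈ D \ A
    · have e1 : ((fun x : X => s • x) ⁻¹' (D \ A)).indicator (fun _ => (1:ℝ≥0∞)) x = 1 := by
        rw [Set.indicator_of_mem (Set.mem_preimage.2 h)]
      have e2 : (D \ A).indicator (1 : X → ℝ≥0∞) (s • x) = 1 := by
        rw [Set.indicator_of_mem h]; rfl
      rw [e1, e2, if_pos h.1, mul_one, mul_one]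
      exact rnd_half_lb ν Θ hΘ1 ((hgood x (hAD hx) s hs).1)
    · rw [Set.indicator_of_notMem (fun hc => h (Set.mem_preimage.1 hc)), mul_zero]
      exact zero_le
  calc Θ⁻¹ * ∑ s ∈ S, ν (A ∩ (fun x => s • x) ⁻¹' (D \ A))
      = ∑ s ∈ S, Θ⁻¹ * ν (A ∩ (fun x => s • x) ⁻¹' (D \ A)) := Finset.mul_sum _ _ _
  _ = ∫⁻ x in A, ∑ s ∈ S, Θ⁻¹ *
        ((fun x : X => s • x) ⁻¹' (D \ A)).indicator (fun _ => (1:ℝ≥0∞)) x ∂ν := by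
      rw [lintegral_finset_sum _ (fun s _ => (Measurable.indicator measurable_const
        ((hmeas s) hDA)).const_mul _)]
      refine Finset.sum_congr rfl (fun s _ => ?_)
      rw [lintegral_const_mul _ (Measurable.indicator measurable_const ((hmeas s) hDA)),
        lintegral_indicator ((hmeas s) hDA), setLIntegral_one,
        Measure.restrict_apply ((hmeas s) hDA), Set.inter_comm]
  _ ≤ ∫⁻ x in A, T x ∂ν := setLIntegral_mono hTmeas h3

/-- flip the boundary sum using symmetry of `S` -/
lemma bdry_flip (hmeas : ∀ γ : Γ, Measurable (fun x : X => γ • x))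
    (hmcp : ∀ γ : Γ, Measure.QuasiMeasurePreserving (fun x : X => γ • x) ν ν)
    (hSinv : ∀ s ∈ S, s⁻¹ ∈ S)
    (hgood : ∀ x ∈ D, ∀ s ∈ S, Θ⁻¹ ≤ rnd ν s x ∧ rnd ν s x ≤ Θ)
    {A C : Set X} (hA : MeasurableSet A) (hC : MeasurableSet C) (hCD : C ⊆ D) :
    Θ⁻¹ * ∑ s ∈ S, ν (C ∩ (fun x => s • x) ⁻¹' A)
      ≤ ∑ s ∈ S, ν (A ∩ (fun x => s • x) ⁻¹' C) := by
  have hre : ∑ s ∈ S, ν (A ∩ (fun x => s • x) ⁻¹' C)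
      = ∑ s ∈ S, ν (A ∩ (fun x => s⁻¹ • x) ⁻¹' C) := by
    refine Finset.sum_nbij' (fun s => s⁻¹) (fun s => s⁻¹) (fun s hs => hSinv s hs)
      (fun s hs => hSinv s hs) (fun s _ => inv_inv s) (fun s _ => inv_inv s)
      (fun s _ => by rw [inv_inv])
  rw [hre, Finset.mul_sum]
  refine Finset.sum_le_sum (fun s hs => ?_)
  have him : A ∩ (fun x => s⁻¹ • x) ⁻¹' C = (fun x => s • x) '' (C ∩ (fun x => s • x) ⁻¹' A) := by
    rw [Set.image_inter_preimage, ← image_smul_eq, Set.inter_comm]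
  rw [him]
  refine le_meas_image ν hmeas hmcp s (hC.inter ((hmeas s) hA)) ?_
  exact fun x hx => (hgood x (hCD hx.1) s hs).1

/-- the measure-boundary is controlled by the sum -/
lemma bdry_outer (hmeas : ∀ γ : Γ, Measurable (fun x : X => γ • x))
    (hmcp : ∀ γ : Γ, Measure.QuasiMeasurePreserving (fun x : X => γ • x) ν ν)
    (hgood : ∀ x ∈ D, ∀ s ∈ S, Θ⁻¹ ≤ rnd ν s x ∧ rnd ν s x ≤ Θ)
    {B : Set X} (hB : MeasurableSet B) (hBD : B ⊆ D) (hDm : MeasurableSet D) :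
    ν ((ex S B ∩ D) \ B) ≤ Θ * ∑ s ∈ S, ν (B ∩ (fun x => s • x) ⁻¹' (D \ B)) := by
  have hincl : (ex S B ∩ D) \ B ⊆
      ⋃ s ∈ S, (fun x => s • x) '' (B ∩ (fun x => s • x) ⁻¹' (D \ B)) := by
    rintro z ⟨⟨hz1, hz2⟩, hz3⟩
    obtain ⟨s, hs, x, hx, rfl⟩ := by simpa [ex] using hz1
    exact Set.mem_biUnion hs ⟨x, ⟨hx, Set.mem_preimage.2 ⟨hz2, hz3⟩⟩, rfl⟩
  refine (measure_mono hincl).trans ((measure_biUnion_finset_le _ _).trans ?_)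
  rw [Finset.mul_sum]
  refine Finset.sum_le_sum (fun s hs => ?_)
  refine meas_image_le ν hmeas hmcp s (hB.inter ((hmeas s) (hDm.diff hB))) ?_
  exact fun x hx => (hgood x (hBD hx.1) s hs).2

/-- **Markov lemma**: uniform expansion with bounded RN-derivatives gives Markov expansion -/
lemma markov (hmeas : ∀ γ : Γ, Measurable (fun x : X => γ • x))
    (hmcp : ∀ γ : Γ, Measure.QuasiMeasurePreserving (fun x : X => γ • x) ν ν)
    (Y : Set X) (hYfin : ν Y ≠ ⊤)
    (h1S : (1:Γ) ∈ S) (hSinv : ∀ s ∈ S, s⁻¹ ∈ S)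
    (hΘ1 : 1 ≤ Θ) (hΘt : Θ ≠ ⊤)
    (hDm : MeasurableSet D) (hDY : D ⊆ Y)
    (hgood : ∀ x ∈ D, ∀ s ∈ S, Θ⁻¹ ≤ rnd ν s x ∧ rnd ν s x ≤ Θ)
    (c₁ : ℝ≥0∞) (hc₁0 : 0 < c₁) (hc₁1 : c₁ ≤ 1)
    (hexp : UExp ν S D c₁ (ν Y / 2)) :
    MarkovSExpansion ν S D := by
  classical
  have hDfin : ν D ≠ ⊤ := ne_top_of_le_ne_top hYfin (measure_mono hDY)
  have hcards : ((S.card : ℝ≥0∞) * Θ) ≠ ⊤ := ENNReal.mul_ne_top (ENNReal.natCast_ne_top _) hΘt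
  have hcard0 : ((S.card : ℝ≥0∞) * Θ) ≠ 0 := by
    refine mul_ne_zero ?_ ?_
    · exact_mod_cast Finset.card_ne_zero_of_mem h1S
    · exact fun h0 => by simp [h0] at hΘ1
  have hΘi0 : (Θ⁻¹ : ℝ≥0∞) ≠ 0 := ENNReal.inv_ne_zero.2 hΘt
  -- the Cheeger constant
  set κ : ℝ≥0∞ := Θ⁻¹ * Θ⁻¹ * Θ⁻¹ * c₁ * ((S.card : ℝ≥0∞) * Θ)⁻¹ * 2⁻¹ with hκ
  have hκ0 : 0 < κ := by
    rw [hκ]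
    have h2 : (2⁻¹ : ℝ≥0∞) ≠ 0 := by norm_num
    refine ENNReal.mul_pos (ENNReal.mul_pos (ENNReal.mul_pos (ENNReal.mul_pos
      (ENNReal.mul_pos hΘi0 hΘi0).ne' hΘi0).ne' hc₁0.ne').ne'
      (ENNReal.inv_ne_zero.2 hcards)).ne' h2
  -- bound every quotient from below
  have hbound : ∀ q ∈ { q : ℝ≥0∞ | ∃ A : Set X, MeasurableSet A ∧ A ⊆ D ∧ 0 < nuT ν S D A ∧
      nuT ν S D A ≤ nuT ν S D D / 2 ∧ q = mkBdry ν S D A / nuT ν S D A }, κ ≤ q := by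
    rintro q ⟨A, hA, hAD, hnA0, hnAhalf, rfl⟩
    have hnAfin : nuT ν S D A ≠ ⊤ := by
      refine ne_top_of_le_ne_top ?_ (nuT_ub ν S Θ D hgood hΘ1 hA hAD)
      exact ENNReal.mul_ne_top hcards (ne_top_of_le_ne_top hYfin (measure_mono (hAD.trans hDY)))
    rw [ENNReal.le_div_iff_mul_le (Or.inl hnA0.ne') (Or.inl hnAfin)]
    have hΘ0 : Θ ≠ 0 := (lt_of_lt_of_le zero_lt_one hΘ1).ne'
    have hBcase : ∀ B : Set X, MeasurableSet B → B ⊆ D → ν B ≤ ν Y / 2 →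
        Θ⁻¹ * (c₁ * ν B) ≤ ∑ s ∈ S, ν (B ∩ (fun x => s • x) ⁻¹' (D \ B)) := by
      intro B hB hBD hBhalf
      have h1 := hexp B hBD hB hBhalf
      have h2 := bdry_outer ν S Θ D hmeas hmcp hgood hB hBD hDm
      have h4 : Θ⁻¹ * ν ((ex S B ∩ D) \ B)
          ≤ ∑ s ∈ S, ν (B ∩ (fun x => s • x) ⁻¹' (D \ B)) := by
        calc Θ⁻¹ * ν ((ex S B ∩ D) \ B)
            ≤ Θ⁻¹ * (Θ * ∑ s ∈ S, ν (B ∩ (fun x => s • x) ⁻¹' (D \ B))) :=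
              mul_le_mul_right h2 _
        _ = ∑ s ∈ S, ν (B ∩ (fun x => s • x) ⁻¹' (D \ B)) := by
            rw [← mul_assoc, ENNReal.inv_mul_cancel hΘ0 hΘt, one_mul]
      exact (mul_le_mul_right h1 Θ⁻¹).trans h4
    by_cases hAh : ν A ≤ ν Y / 2
    · -- small side is A itself
      have hS1 := hBcase A hA hAD hAh
      have hmk := mkBdry_ge ν S Θ D hmeas hgood h1S hΘ1 hΘt hDm hA hAD
      have hnuA : nuT ν S D A ≤ ((S.card : ℝ≥0∞) * Θ) * ν A := nuT_ub ν S Θ D hgood hΘ1 hA hAD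
      calc κ * nuT ν S D A ≤ κ * (((S.card : ℝ≥0∞) * Θ) * ν A) := mul_le_mul_right hnuA _
      _ ≤ Θ⁻¹ * (Θ⁻¹ * (c₁ * ν A)) := by
          have he : κ * (((S.card : ℝ≥0∞) * Θ) * ν A)
              = (Θ⁻¹ * (Θ⁻¹ * (c₁ * ν A))) * (Θ⁻¹ * 2⁻¹) *
                (((S.card : ℝ≥0∞) * Θ)⁻¹ * ((S.card : ℝ≥0∞) * Θ)) := by
            rw [hκ]; ring
          rw [he, ENNReal.inv_mul_cancel hcard0 hcards, mul_one]
          calc (Θ⁻¹ * (Θ⁻¹ * (c₁ * ν A))) * (Θ⁻¹ * 2⁻¹)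
              ≤ (Θ⁻¹ * (Θ⁻¹ * (c₁ * ν A))) * 1 := by
                refine mul_le_mul_right ?_ _
                exact mul_le_one' (ENNReal.inv_le_one.2 hΘ1) (by norm_num)
          _ = Θ⁻¹ * (Θ⁻¹ * (c₁ * ν A)) := mul_one _
      _ ≤ Θ⁻¹ * ∑ s ∈ S, ν (A ∩ (fun x => s • x) ⁻¹' (D \ A)) :=
            mul_le_mul_right hS1 _
      _ ≤ mkBdry ν S D A := hmk
    · -- complement case
      push_neg at hAh
      have hBm : MeasurableSet (D \ A) := hDm.diff hA
      have hBD : (D \ A) ⊆ D := Set.diff_subset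
      have hDBA : D \ (D \ A) = A := Set.diff_diff_cancel_left hAD
      have hBhalf : ν (D \ A) ≤ ν Y / 2 := by
        by_contra hc
        push_neg at hc
        have hsum : ν D = ν A + ν (D \ A) := by
          rw [← measure_union (disjoint_sdiff_self_right) (hDm.diff hA),
            Set.union_diff_cancel hAD]
        have hlt : ν Y < ν D := by
          calc ν Y = ν Y / 2 + ν Y / 2 := (ENNReal.add_halves _).symm
          _ < ν A + ν (D \ A) := ENNReal.add_lt_add hAh hc
          _ = ν D := hsum.symm
        exact absurd (measure_mono hDY) (not_le.2 hlt)
      have hnuTD : nuT ν S D D = nuT ν S D A + nuT ν S D (D \ A) := by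
        rw [← measure_union (disjoint_sdiff_self_right) (hDm.diff hA),
          Set.union_diff_cancel hAD]
      have hnuTDfin : nuT ν S D D ≠ ⊤ := by
        refine ne_top_of_le_ne_top ?_ (nuT_ub ν S Θ D hgood hΘ1 hDm (subset_refl D))
        exact ENNReal.mul_ne_top hcards hDfin
      have hnuB : nuT ν S D D / 2 ≤ nuT ν S D (D \ A) := by
        by_contra hc
        push_neg at hc
        have hlt : nuT ν S D D < nuT ν S D D := by
          calc nuT ν S D D = nuT ν S D A + nuT ν S D (D \ A) := hnuTD
          _ ≤ nuT ν S D D / 2 + nuT ν S D (D \ A) := add_le_add hnAhalf le_rfl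
          _ < nuT ν S D D / 2 + nuT ν S D D / 2 :=
              ENNReal.add_lt_add_left (by
                exact ne_top_of_le_ne_top hnuTDfin (div_le_self' _ _ (by norm_num))) hc
          _ = nuT ν S D D := ENNReal.add_halves _
        exact lt_irrefl _ hlt
      have hνB : nuT ν S D D / 2 ≤ ((S.card : ℝ≥0∞) * Θ) * ν (D \ A) :=
        hnuB.trans (nuT_ub ν S Θ D hgood hΘ1 hBm hBD)
      have hinvB : ((S.card : ℝ≥0∞) * Θ)⁻¹ * (nuT ν S D D / 2) ≤ ν (D \ A) := by
        calc ((S.card : ℝ≥0∞) * Θ)⁻¹ * (nuT ν S D D / 2)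
            ≤ ((S.card : ℝ≥0∞) * Θ)⁻¹ * (((S.card : ℝ≥0∞) * Θ) * ν (D \ A)) :=
              mul_le_mul_right hνB _
        _ = ν (D \ A) := by rw [← mul_assoc, ENNReal.inv_mul_cancel hcard0 hcards, one_mul]
      have hS1 := hBcase (D \ A) hBm hBD hBhalf
      rw [hDBA] at hS1
      have hflip := bdry_flip ν S Θ D hmeas hmcp hSinv hgood hA hBm hBD
      have hmk := mkBdry_ge ν S Θ D hmeas hgood h1S hΘ1 hΘt hDm hA hAD
      have f2 : Θ⁻¹ * (Θ⁻¹ * (Θ⁻¹ * (c₁ * ν (D \ A))))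
          ≤ Θ⁻¹ * (Θ⁻¹ * ∑ s ∈ S, ν ((D \ A) ∩ (fun x => s • x) ⁻¹' A)) :=
        mul_le_mul_right (mul_le_mul_right hS1 _) _
      have f4 : Θ⁻¹ * (Θ⁻¹ * ∑ s ∈ S, ν ((D \ A) ∩ (fun x => s • x) ⁻¹' A))
          ≤ Θ⁻¹ * ∑ s ∈ S, ν (A ∩ (fun x => s • x) ⁻¹' (D \ A)) :=
        mul_le_mul_right hflip _
      calc κ * nuT ν S D A ≤ κ * nuT ν S D D :=
            mul_le_mul_right (by rw [hnuTD]; exact le_self_add) _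
      _ = Θ⁻¹ * (Θ⁻¹ * (Θ⁻¹ * (c₁ *
            (((S.card : ℝ≥0∞) * Θ)⁻¹ * (nuT ν S D D / 2))))) := by
          rw [hκ, div_eq_mul_inv]; ring
      _ ≤ Θ⁻¹ * (Θ⁻¹ * (Θ⁻¹ * (c₁ * ν (D \ A)))) :=
          mul_le_mul_right (mul_le_mul_right (mul_le_mul_right
            (mul_le_mul_right hinvB _) _) _) _
      _ ≤ Θ⁻¹ * ∑ s ∈ S, ν (A ∩ (fun x => s • x) ⁻¹' (D \ A)) := f2.trans f4
      _ ≤ mkBdry ν S D A := hmk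
  refine lt_of_lt_of_le hκ0 (le_sInf hbound)

end Markov



/-- generic recursion with choice -/
lemma nat_rec_choice {α : Type*} (Inv : ℕ → α → Prop) (link : α → α → Prop)
    (base : ∃ a, Inv 0 a) (step : ∀ n a, Inv n a → ∃ b, Inv (n+1) b ∧ link a b) :
    ∃ f : ℕ → α, (∀ n, Inv n (f n)) ∧ ∀ n, link (f n) (f (n+1)) := by
  let F : ∀ n : ℕ, {a : α // Inv n a} := fun n =>
    Nat.rec ⟨base.choose, base.choose_spec⟩
      (fun n prev => ⟨(step n prev.1 prev.2).choose, (step n prev.1 prev.2).choose_spec.1⟩) n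
  refine ⟨fun n => (F n).1, fun n => (F n).2, fun n => ?_⟩
  show link (F n).1 (F (n+1)).1
  have hred : F (n+1) = ⟨(step n (F n).1 (F n).2).choose,
      (step n (F n).1 (F n).2).choose_spec.1⟩ := rfl
  rw [hred]
  exact (step n (F n).1 (F n).2).choose_spec.2

/-- the set of points of `Y` where the first `m` Radon–Nikodym derivatives are `T`-bounded -/
def goodSet (ν : Measure X) (e : ℕ → Γ) (Y : Set X) (m T : ℕ) : Set X :=
  {x ∈ Y | ∀ j ≤ m, ((T : ℝ≥0∞))⁻¹ ≤ rnd ν (e j) x ∧ rnd ν (e j) x ≤ (T : ℝ≥0∞)}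

lemma goodSet_meas (ν : Measure X) [SigmaFinite ν] (e : ℕ → Γ) {Y : Set X} (hY : MeasurableSet Y)
    (m T : ℕ) : MeasurableSet (goodSet ν e Y m T) := by
  have : goodSet ν e Y m T = Y ∩ ⋂ (j : ℕ), ⋂ (_ : j ≤ m),
      ({x | ((T : ℝ≥0∞))⁻¹ ≤ rnd ν (e j) x} ∩ {x | rnd ν (e j) x ≤ (T : ℝ≥0∞)}) := by
    ext x
    simp only [goodSet, Set.mem_setOf_eq, Set.mem_inter_iff, Set.mem_iInter]
  rw [this]
  refine hY.inter (MeasurableSet.iInter (fun j => MeasurableSet.iInter (fun _ => ?_)))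
  exact (measurableSet_le measurable_const (measurable_rnd ν (e j))).inter
    (measurableSet_le (measurable_rnd ν (e j)) measurable_const)

lemma goodSet_mono (ν : Measure X) (e : ℕ → Γ) (Y : Set X) (m : ℕ) {T T' : ℕ}
    (h : T ≤ T') : goodSet ν e Y m T ⊆ goodSet ν e Y m T' := by
  rintro x ⟨hxY, hx⟩
  refine ⟨hxY, fun j hj => ?_⟩
  obtain ⟨h1, h2⟩ := hx j hj
  have hc : (T : ℝ≥0∞) ≤ (T' : ℝ≥0∞) := by exact_mod_cast h
  exact ⟨le_trans (ENNReal.inv_le_inv.2 hc) h1, h2.trans hc⟩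

lemma exists_T (ν : Measure X) [SigmaFinite ν]
    (hmeas : ∀ γ : Γ, Measurable (fun x : X => γ • x))
    (hmcp : ∀ γ : Γ, Measure.QuasiMeasurePreserving (fun x : X => γ • x) ν ν)
    {Y : Set X} (hY : MeasurableSet Y) (hYfin : ν Y ≠ ⊤) (e : ℕ → Γ) (m : ℕ)
    {t : ℝ≥0∞} (ht : 0 < t) :
    ∃ T : ℕ, 1 ≤ T ∧ ν (Y \ goodSet ν e Y m T) ≤ t := by
  classical
  set Bad : ℕ → Set X := fun T => Y \ goodSet ν e Y m (T+1) with hBad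
  have hanti : Antitone Bad := by
    intro T T' h
    exact Set.diff_subset_diff_right (goodSet_mono ν e Y m (Nat.succ_le_succ h))
  -- the intersection is null
  set U : Set X := ⋃ j ∈ Finset.range (m+1),
      ({x | rnd ν (e j) x = 0} ∪ {x | rnd ν (e j) x = ⊤}) with hU
  have hUnull : ν U = 0 := by
    rw [hU]
    refine measure_biUnion_null_iff (Finset.range (m+1)).countable_toSet |>.2 (fun j _ => ?_)
    refine measure_union_null ?_ ?_
    · have h1 := rnd_pos_ae ν hmeas hmcp (e j)
      rw [ae_iff] at h1
      refine measure_mono_null ?_ h1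
      intro x hx
      simp only [Set.mem_setOf_eq] at hx ⊢
      rw [hx]; simp
    · have h1 := rnd_lt_top_ae ν hmeas (e j)
      rw [ae_iff] at h1
      refine measure_mono_null ?_ h1
      intro x hx
      simp only [Set.mem_setOf_eq] at hx ⊢
      rw [hx]; simp
  have hInull : ν (⋂ T, Bad T) = 0 := by
    refine measure_mono_null ?_ hUnull
    intro x hx
    simp only [Set.mem_iInter] at hx
    by_contra hxU
    -- construct a bound
    have hch : ∀ j : ℕ, ∃ n : ℕ, j ≤ m →
        ((n : ℝ≥0∞))⁻¹ ≤ rnd ν (e j) x ∧ rnd ν (e j) x ≤ (n : ℝ≥0∞) := by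
      intro j
      by_cases hj : j ≤ m
      · have hx0 : rnd ν (e j) x ≠ 0 := by
          intro h0
          exact hxU (Set.mem_biUnion (Finset.mem_range.2 (Nat.lt_succ_of_le hj))
            (Or.inl h0))
        have hxt : rnd ν (e j) x ≠ ⊤ := by
          intro h0
          exact hxU (Set.mem_biUnion (Finset.mem_range.2 (Nat.lt_succ_of_le hj))
            (Or.inr h0))
        obtain ⟨n1, hn1⟩ := ENNReal.exists_nat_gt hxt
        obtain ⟨n2, hn2⟩ := ENNReal.exists_nat_gt (ENNReal.inv_ne_top.2 hx0)
        refine ⟨max n1 n2, fun _ => ⟨?_, ?_⟩⟩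
        · have h3 : (rnd ν (e j) x)⁻¹ ≤ ((max n1 n2 : ℕ) : ℝ≥0∞) := by
            refine hn2.le.trans ?_
            exact_mod_cast Nat.le_max_right n1 n2
          have h4 := ENNReal.inv_le_inv.2 h3
          rwa [inv_inv] at h4
        · refine hn1.le.trans ?_
          exact_mod_cast Nat.le_max_left n1 n2
      · exact ⟨0, fun h => absurd h hj⟩
    choose nf hnf using hch
    set T := (Finset.range (m+1)).sup nf with hT
    have hxG : x ∈ goodSet ν e Y m (T+1) := by
      have hxY : x ∈ Y := (hx 0).1
      refine ⟨hxY, fun j hj => ?_⟩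
      obtain ⟨h1, h2⟩ := hnf j hj
      have hle : (nf j : ℝ≥0∞) ≤ ((T+1 : ℕ) : ℝ≥0∞) := by
        have : nf j ≤ T := Finset.le_sup (Finset.mem_range.2 (Nat.lt_succ_of_le hj))
        exact_mod_cast this.trans (Nat.le_succ T)
      constructor
      · exact le_trans (ENNReal.inv_le_inv.2 hle) h1
      · exact h2.trans hle
    exact (hx T).2 (by exact_mod_cast hxG)
  have hmeasB : ∀ T, NullMeasurableSet (Bad T) ν :=
    fun T => ((hY.diff (goodSet_meas ν e hY m (T+1)))).nullMeasurableSet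
  have hfin : ∃ T, ν (Bad T) ≠ ⊤ :=
    ⟨0, ne_top_of_le_ne_top hYfin (measure_mono Set.diff_subset)⟩
  have htend := tendsto_measure_iInter_atTop hmeasB hanti hfin
  rw [hInull] at htend
  obtain ⟨T, hT⟩ := (htend.eventually (gt_mem_nhds ht)).exists
  exact ⟨T+1, Nat.le_add_left 1 T, hT.le⟩

lemma ofReal_quarter : ENNReal.ofReal (1/4 : ℝ) = (4 : ℝ≥0∞)⁻¹ := by
  rw [show (1/4:ℝ) = (4:ℝ)⁻¹ by norm_num, ENNReal.ofReal_inv_of_pos (by norm_num)]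
  norm_num

lemma div32_add_div32 (a : ℝ≥0∞) : a / 32 + a / 32 = a / 16 := by
  have h32 : (32 : ℝ≥0∞)⁻¹ = 2⁻¹ * 16⁻¹ := by
    rw [show (32:ℝ≥0∞) = 2 * 16 by norm_num,
      ENNReal.mul_inv (Or.inl (by norm_num)) (Or.inl (by norm_num))]
  rw [div_eq_mul_inv, div_eq_mul_inv, h32]
  calc a * (2⁻¹ * 16⁻¹) + a * (2⁻¹ * 16⁻¹) = (2⁻¹ + 2⁻¹) * (a * 16⁻¹) := by ring
  _ = a * 16⁻¹ := by rw [ENNReal.inv_two_add_inv_two, one_mul]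

lemma pow_succ_sum (p : ℕ) (a : ℝ≥0∞) :
    (2⁻¹ : ℝ≥0∞)^(p+3) * a + (2⁻¹ : ℝ≥0∞)^(p+3) * a ≤ (2⁻¹ : ℝ≥0∞)^p * a := by
  have h1 : (2⁻¹ : ℝ≥0∞)^(p+3) * a + (2⁻¹ : ℝ≥0∞)^(p+3) * a
      = (2 * 2⁻¹) * ((2⁻¹ : ℝ≥0∞)^(p+2) * a) := by
    rw [pow_succ]
    ring
  rw [h1, ENNReal.mul_inv_cancel (by norm_num) (by norm_num), one_mul]
  refine mul_le_mul_left (pow_le_pow_of_le_one (zero_le) (by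
    exact ENNReal.inv_le_one.2 one_le_two) (by omega)) _

/-- one construction step -/
lemma buildStep (ν : Measure X)
    (Y : Set X) (hYpos : 0 < ν Y) (hYfin : ν Y ≠ ⊤)
    (SB : ℕ → Finset Γ) (hSBmono : ∀ {K K' : ℕ}, K ≤ K' → SB K ⊆ SB K')
    (hSB1 : ∀ K, (1:Γ) ∈ SB K)
    (E : ℕ → Set X) (hEmeas : ∀ m, MeasurableSet (E m)) (hEY : ∀ m, E m ⊆ Y)
    (hEmono : Monotone E)
    (hEsmall : ∀ t : ℝ≥0∞, 0 < t → ∃ m₀ : ℕ, ∀ m' ≥ m₀, ν (Y \ E m') ≤ t)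
    (CE : ℝ → ℝ≥0∞) (kk : ℝ → ℕ)
    (hCE : ∀ α ∈ Set.Ioc (0:ℝ) (1/2), 0 < CE α ∧ CE α ≤ 1)
    (hbigF : ∀ α ∈ Set.Ioc (0:ℝ) (1/2), ∀ K : ℕ, kk α ≤ K →
      ∀ B : Set X, B ⊆ Y → MeasurableSet B → ENNReal.ofReal α * ν Y ≤ ν B →
        ν B ≤ ν Y / 2 → (1 + CE α) * ν B < ν (ex (SB K) B ∩ Y))
    (mcond : ℕ → ℕ → Prop)
    (hmcond : ∀ K', ∃ m₁, ∀ m' ≥ m₁, mcond K' m')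
    (p : ℕ) (D : Set X) (K m : ℕ) (hDm : MeasurableSet D) (hDE : D ⊆ E m)
    (hUE : ∃ c₀ : ℝ≥0∞, 0 < c₀ ∧ c₀ ≤ 1 ∧ UExp ν (SB K) D c₀ (ν Y / 2)) :
    ∃ (D' : Set X) (K' m' : ℕ), MeasurableSet D' ∧ D ⊆ D' ∧ D' ⊆ E m' ∧ mcond K' m' ∧
      ν (Y \ D') ≤ (2⁻¹ : ℝ≥0∞)^p * ν Y ∧ 0 < ν D' ∧
      ∃ c₁ : ℝ≥0∞, 0 < c₁ ∧ c₁ ≤ 1 ∧ UExp ν (SB K') D' c₁ (ν Y / 2) := by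
  classical
  obtain ⟨c₀, hc₀, hc₀1, hUE⟩ := hUE
  have h14 : (1/4 : ℝ) ∈ Set.Ioc (0:ℝ) (1/2) := by norm_num
  set c4 : ℝ≥0∞ := CE (1/4) with hc4def
  obtain ⟨hc40, hc41⟩ := hCE _ h14
  have hc4top : c4 ≠ ⊤ := ne_top_of_le_ne_top (by norm_num) hc41
  -- the budget
  set γ : ℝ := min (min (4⁻¹:ℝ) ((2⁻¹:ℝ)^(p+3))) (c4.toReal / 32) with hγdef
  have hc4tR : 0 < c4.toReal := ENNReal.toReal_pos hc40.ne' hc4top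
  have hγ0 : 0 < γ := by
    refine lt_min (lt_min (by norm_num) (by positivity)) (by positivity)
  have hγ14 : γ ≤ 4⁻¹ := le_trans (min_le_left _ _) (min_le_left _ _)
  have hγIoc : γ ∈ Set.Ioc (0:ℝ) (1/2) := ⟨hγ0, by
    refine hγ14.trans (by norm_num)⟩
  set cg : ℝ≥0∞ := CE γ with hcgdef
  obtain ⟨hcg0, hcg1⟩ := hCE _ hγIoc
  set g : ℝ≥0∞ := ENNReal.ofReal γ * ν Y with hgdef
  have hg0 : 0 < g := ENNReal.mul_pos (by simpa using hγ0) hYpos.ne'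
  have hg4 : g ≤ ν Y / 4 := by
    rw [hgdef, ENNReal.div_eq_inv_mul]
    refine mul_le_mul_left ?_ _
    calc ENNReal.ofReal γ ≤ ENNReal.ofReal (1/4:ℝ) :=
          ENNReal.ofReal_le_ofReal (by simpa using hγ14)
    _ = 4⁻¹ := ofReal_quarter
  have hgc4 : g ≤ c4 / 32 * ν Y := by
    rw [hgdef]
    refine mul_le_mul_left ?_ _
    calc ENNReal.ofReal γ ≤ ENNReal.ofReal (c4.toReal / 32) :=
          ENNReal.ofReal_le_ofReal (min_le_right _ _)
    _ = ENNReal.ofReal c4.toReal / ENNReal.ofReal 32 := by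
        rw [ENNReal.ofReal_div_of_pos (by norm_num)]
    _ = c4 / 32 := by rw [ENNReal.ofReal_toReal hc4top]; norm_num
  have hgp : g ≤ (2⁻¹ : ℝ≥0∞)^(p+3) * ν Y := by
    rw [hgdef]
    refine mul_le_mul_left ?_ _
    calc ENNReal.ofReal γ ≤ ENNReal.ofReal ((2⁻¹:ℝ)^(p+3)) :=
          ENNReal.ofReal_le_ofReal (le_trans (min_le_left _ _) (min_le_right _ _))
    _ = (2⁻¹ : ℝ≥0∞)^(p+3) := by
        rw [ENNReal.ofReal_pow (by norm_num), ENNReal.ofReal_inv_of_pos (by norm_num)]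
        norm_num
  -- the scale
  set K' : ℕ := max K (max (kk γ) (kk (1/4))) with hK'def
  -- the filtration index
  have htpos : 0 < min (min (cg / 2 * g) (c4 / 32 * ν Y)) ((2⁻¹ : ℝ≥0∞)^(p+3) * ν Y) := by
    refine lt_min (lt_min ?_ ?_) ?_
    · refine ENNReal.mul_pos ?_ hg0.ne'
      simp only [ne_eq, ENNReal.div_eq_zero_iff, not_or]
      exact ⟨hcg0.ne', by norm_num⟩
    · refine ENNReal.mul_pos ?_ hYpos.ne'
      simp only [ne_eq, ENNReal.div_eq_zero_iff, not_or]
      exact ⟨hc40.ne', by norm_num⟩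
    · exact ENNReal.mul_pos (pow_ne_zero _ (by norm_num)) hYpos.ne'
  obtain ⟨m₀, hm₀⟩ := hEsmall _ htpos
  obtain ⟨m₁, hm₁⟩ := hmcond K'
  set m' : ℕ := max (max m₀ m) m₁ with hm'def
  have hm'0 : m₀ ≤ m' := le_trans (le_max_left _ _) (le_max_left _ _)
  have hm'm : m ≤ m' := le_trans (le_max_right _ _) (le_max_left _ _)
  have hm'1 : m₁ ≤ m' := le_max_right _ _
  have hYE : ν (Y \ E m') ≤ min (min (cg / 2 * g) (c4 / 32 * ν Y))
      ((2⁻¹ : ℝ≥0∞)^(p+3) * ν Y) := hm₀ m' hm'0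
  -- apply the stage lemma
  obtain ⟨D', hD'm, hPD', hD'E, hED', c₁, hc₁0, hc₁1, hUE'⟩ :=
    stage ν Y hYfin (SB K') (hSB1 K') (E m') (hEmeas m') (hEY m')
      D hDm (hDE.trans (hEmono hm'm)) c₀ hc₀ hc₀1
      (UExp_mono_S ν (hSBmono (le_max_left _ _)) hUE)
      g hg0 hg4 cg hcg0 hcg1
      (by
        intro B hBY hBm hgB hBhalf
        exact hbigF γ hγIoc K' (le_trans (le_max_left _ _) (le_max_right _ _)) B hBY hBm hgB hBhalf)
      c4 hc40 hc41
      (by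
        intro B hBY hBm h4B hBhalf
        refine hbigF (1/4) h14 K' (le_trans (le_max_right _ _) (le_max_right _ _)) B hBY hBm ?_ hBhalf
        rw [ofReal_quarter, ← ENNReal.div_eq_inv_mul]
        exact h4B)
      (hYE.trans (le_trans (min_le_left _ _) (min_le_left _ _)))
      (by
        have h1 : ν (Y \ E m') ≤ c4 / 32 * ν Y :=
          hYE.trans (le_trans (min_le_left _ _) (min_le_right _ _))
        calc ν (Y \ E m') + g ≤ c4 / 32 * ν Y + c4 / 32 * ν Y := add_le_add h1 hgc4
        _ = (c4 / 32 + c4 / 32) * ν Y := (add_mul _ _ _).symm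
        _ = c4 / 16 * ν Y := by rw [div32_add_div32])
  -- wrap up
  have hYD' : ν (Y \ D') ≤ ν (Y \ E m') + ν (E m' \ D') := by
    refine (measure_mono ?_).trans (measure_union_le _ _)
    rintro z ⟨hz1, hz2⟩
    by_cases hzE : z ∈ E m'
    · exact Or.inr ⟨hzE, hz2⟩
    · exact Or.inl ⟨hz1, hzE⟩
  have hsmall : ν (Y \ D') ≤ (2⁻¹ : ℝ≥0∞)^p * ν Y := by
    refine hYD'.trans ?_
    calc ν (Y \ E m') + ν (E m' \ D')
        ≤ (2⁻¹ : ℝ≥0∞)^(p+3) * ν Y + (2⁻¹ : ℝ≥0∞)^(p+3) * ν Y :=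
          add_le_add (hYE.trans (min_le_right _ _)) (hED'.trans hgp)
    _ ≤ (2⁻¹ : ℝ≥0∞)^p * ν Y := pow_succ_sum p (ν Y)
  have hD'pos : 0 < ν D' := by
    by_contra h0
    push_neg at h0
    have hD'0 : ν D' = 0 := le_antisymm h0 (zero_le)
    have hYsub : ν Y ≤ ν D' + ν (Y \ D') := by
      refine (measure_mono ?_).trans (measure_union_le _ _)
      intro z hz
      by_cases hzD : z ∈ D'
      · exact Or.inl hzD
      · exact Or.inr ⟨hz, hzD⟩
    have h16 : ν (Y \ D') ≤ 16⁻¹ * ν Y := by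
      refine hYD'.trans ?_
      have h1 : ν (Y \ E m') ≤ c4 / 32 * ν Y :=
        hYE.trans (le_trans (min_le_left _ _) (min_le_right _ _))
      calc ν (Y \ E m') + ν (E m' \ D') ≤ c4 / 32 * ν Y + c4 / 32 * ν Y :=
            add_le_add h1 (hED'.trans hgc4)
      _ = c4 / 16 * ν Y := by rw [← add_mul, div32_add_div32]
      _ ≤ 16⁻¹ * ν Y := by
          refine mul_le_mul_left ?_ _
          calc c4 / 16 ≤ 1 / 16 := ENNReal.div_le_div_right hc41 _
          _ = 16⁻¹ := one_div _
    have hcon : ν Y < ν Y := by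
      calc ν Y ≤ ν D' + ν (Y \ D') := hYsub
      _ = ν (Y \ D') := by rw [hD'0, zero_add]
      _ ≤ 16⁻¹ * ν Y := h16
      _ < 1 * ν Y := by
          refine (ENNReal.mul_lt_mul_iff_left hYpos.ne' hYfin).2 ?_
          norm_num
      _ = ν Y := one_mul _
    exact lt_irrefl _ hcon
  exact ⟨D', K', m', hD'm, hPD', hD'E, hm₁ m' hm'1, hsmall, hD'pos, c₁, hc₁0, hc₁1, hUE'⟩


end ExhAux

/-- **Proposition 3.23, first part.** If `Y` is a domain of asymptotic
expansion for a measure-class-preserving action, then `Y` admits an exhaustion by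
domains `Y_n` of Markov `S⁽ⁿ⁾`-expansion, with Radon–Nikodym derivatives bounded
between `1/Θ_n` and `Θ_n` on the relevant part of each `Y_n`. -/
theorem exhaustion_by_markov_domains {Γ X : Type*} [Group Γ] [Countable Γ]
    [MulAction Γ X] [MeasurableSpace X]
    (ℓ : Γ → ℕ) (hl0 : ∀ γ : Γ, ℓ γ = 0 ↔ γ = 1) (hlinv : ∀ γ : Γ, ℓ γ⁻¹ = ℓ γ)
    (hlsub : ∀ γ₁ γ₂ : Γ, ℓ (γ₁ * γ₂) ≤ ℓ γ₁ + ℓ γ₂)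
    (hlprop : ∀ k : ℕ, {γ : Γ | ℓ γ ≤ k}.Finite)
    (ν : Measure X) [SigmaFinite ν]
    (hmeas : ∀ γ : Γ, Measurable (fun x : X => γ • x))
    (hmcp : ∀ γ : Γ, Measure.QuasiMeasurePreserving (fun x : X => γ • x) ν ν)
    (Y : Set X) (hY : MeasurableSet Y) (hYpos : 0 < ν Y) (hYfin : ν Y < ⊤)
    (hasym : DomainAsymptoticExpansion ℓ ν Y) :
    ∃ (Yn : ℕ → Set X) (Sn : ℕ → Finset Γ) (Θ : ℕ → ℝ),
      Monotone Yn ∧ (∀ n, Yn n ⊆ Y) ∧ ν (Y \ ⋃ n, Yn n) = 0 ∧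
      (∀ n, MeasurableSet (Yn n) ∧ 0 < ν (Yn n) ∧ ν (Yn n) < ⊤) ∧
      (∀ n, (∀ s ∈ Sn n, s⁻¹ ∈ Sn n) ∧ (1 : Γ) ∈ Sn n) ∧
      (∀ n, MarkovSExpansion ν (Sn n) (Yn n)) ∧
      (∀ n, 1 ≤ Θ n ∧ ∀ y ∈ Yn n, ∀ s ∈ Sn n, s • y ∈ Yn n →
        ENNReal.ofReal (1 / Θ n) ≤ rnd ν s y ∧ rnd ν s y ≤ ENNReal.ofReal (Θ n)) := by
  classical
  obtain ⟨c, k, hc, hexp⟩ := hasym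
  obtain ⟨e, he⟩ := exists_surjective_nat Γ
  have hYfin' : ν Y ≠ ⊤ := hYfin.ne
  -- choice of RN-bounds
  have hTex : ∀ m : ℕ, ∃ T : ℕ, 1 ≤ T ∧
      ν (Y \ ExhAux.goodSet ν e Y m T) ≤ (2⁻¹:ℝ≥0∞)^m * ν Y :=
    fun m => ExhAux.exists_T ν hmeas hmcp hY hYfin' e m
      (pos_iff_ne_zero.2 (mul_ne_zero (pow_ne_zero _ (by norm_num)) hYpos.ne'))
  choose T hT1 hT2 using hTex
  -- the good filtration
  set E : ℕ → Set X := fun m => ⋂ j : ℕ, ExhAux.goodSet ν e Y (m+j) (T (m+j)) with hEdef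
  have hEgood : ∀ m, E m ⊆ ExhAux.goodSet ν e Y m (T m) := by
    intro m
    have h0 := Set.iInter_subset
      (fun j => ExhAux.goodSet ν e Y (m+j) (T (m+j))) 0
    simpa using h0
  have hEmeas : ∀ m, MeasurableSet (E m) := fun m =>
    MeasurableSet.iInter (fun j => ExhAux.goodSet_meas ν e hY _ _)
  have hEY : ∀ m, E m ⊆ Y := fun m => (hEgood m).trans (fun x hx => hx.1)
  have hEmono : Monotone E := by
    intro m m' hmm x hx
    refine Set.mem_iInter.2 (fun j => ?_)
    have h1 : m' + j = m + ((m' - m) + j) := by omega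
    rw [h1]
    exact Set.mem_iInter.1 hx _
  have hEbound : ∀ m, ν (Y \ E m) ≤ (2⁻¹:ℝ≥0∞)^m * (2 * ν Y) := by
    intro m
    have hsub : Y \ E m ⊆ ⋃ j : ℕ, (Y \ ExhAux.goodSet ν e Y (m+j) (T (m+j))) := by
      rintro x ⟨hxY, hxE⟩
      rw [hEdef, Set.mem_iInter] at hxE
      push_neg at hxE
      obtain ⟨j, hj⟩ := hxE
      exact Set.mem_iUnion.2 ⟨j, hxY, hj⟩
    refine (measure_mono hsub).trans ((measure_iUnion_le _).trans ?_)
    calc ∑' j : ℕ, ν (Y \ ExhAux.goodSet ν e Y (m+j) (T (m+j)))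
        ≤ ∑' j : ℕ, (2⁻¹:ℝ≥0∞)^(m+j) * ν Y := ENNReal.tsum_le_tsum (fun j => hT2 _)
    _ = (2⁻¹:ℝ≥0∞)^m * (2 * ν Y) := by
        have h1 : ∀ j : ℕ, (2⁻¹:ℝ≥0∞)^(m+j) * ν Y
            = (2⁻¹:ℝ≥0∞)^m * ((2⁻¹:ℝ≥0∞)^j * ν Y) := by
          intro j; rw [pow_add]; ring
        rw [tsum_congr h1, ENNReal.tsum_mul_left]
        congr 1
        rw [ENNReal.tsum_mul_right, ENNReal.tsum_geometric, ENNReal.one_sub_inv_two, inv_inv]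
  have hEsmall : ∀ t : ℝ≥0∞, 0 < t → ∃ m₀ : ℕ, ∀ m' ≥ m₀, ν (Y \ E m') ≤ t := by
    intro t ht
    have h2Y0 : 2 * ν Y ≠ 0 := mul_ne_zero (by norm_num) hYpos.ne'
    have h2Yt : 2 * ν Y ≠ ⊤ := ENNReal.mul_ne_top (by norm_num) hYfin'
    have hdiv : t / (2 * ν Y) ≠ 0 := by
      simp only [ne_eq, ENNReal.div_eq_zero_iff, not_or]
      exact ⟨ht.ne', h2Yt⟩
    obtain ⟨m₀, hm₀⟩ := ENNReal.exists_inv_two_pow_lt hdiv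
    refine ⟨m₀, fun m' hm' => ?_⟩
    have h3 : (2⁻¹:ℝ≥0∞)^m₀ * (2 * ν Y) ≤ t :=
      (ENNReal.le_div_iff_mul_le (Or.inl h2Y0) (Or.inl h2Yt)).1 hm₀.le
    refine (hEbound m').trans (le_trans ?_ h3)
    exact mul_le_mul_left (pow_le_pow_of_le_one (zero_le)
      (ENNReal.inv_le_one.2 one_le_two) hm') _
  -- the balls
  set SB : ℕ → Finset Γ := fun K => (hlprop K).toFinset with hSBdef
  have hSBmem : ∀ (K : ℕ) (γ' : Γ), γ' ∈ SB K ↔ ℓ γ' ≤ K := fun K γ' => (hlprop K).mem_toFinset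
  have hSB1 : ∀ K, (1:Γ) ∈ SB K := fun K => (hSBmem K 1).2 (by
    rw [(hl0 1).2 rfl]; exact Nat.zero_le K)
  have hSBinv : ∀ K, ∀ s ∈ SB K, s⁻¹ ∈ SB K := fun K s hs => (hSBmem K s⁻¹).2 (by
    rw [hlinv]; exact (hSBmem K s).1 hs)
  have hSBmono : ∀ {K K' : ℕ}, K ≤ K' → SB K ⊆ SB K' := fun {K K'} h s hs =>
    (hSBmem _ s).2 (le_trans ((hSBmem _ s).1 hs) h)
  -- the index condition
  set mcond : ℕ → ℕ → Prop := fun K m => ∀ s ∈ SB K, ∃ j ≤ m, e j = s with hmconddef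
  have hmcond : ∀ K', ∃ m₁, ∀ m' ≥ m₁, mcond K' m' := by
    intro K'
    choose idx hidx using he
    refine ⟨(SB K').sup idx, fun m' hm' s hs =>
      ⟨idx s, le_trans (Finset.le_sup hs) hm', hidx s⟩⟩
  -- expansion input
  set CE : ℝ → ℝ≥0∞ := fun α => min (ENNReal.ofReal (c α)) 1 with hCEdef
  have hCEp : ∀ α ∈ Set.Ioc (0:ℝ) (1/2), 0 < CE α ∧ CE α ≤ 1 := by
    intro α hα
    exact ⟨lt_min (ENNReal.ofReal_pos.2 (hc α hα)) one_pos, min_le_right _ _⟩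
  have hbigF : ∀ α ∈ Set.Ioc (0:ℝ) (1/2), ∀ K : ℕ, k α ≤ K →
      ∀ B : Set X, B ⊆ Y → MeasurableSet B → ENNReal.ofReal α * ν Y ≤ ν B →
        ν B ≤ ν Y / 2 → (1 + CE α) * ν B < ν (ExhAux.ex (SB K) B ∩ Y) := by
    intro α hα K hK B hBY hBm hlow hup
    have h1 := hexp α hα B hBm hBY hlow hup
    have h2 : (⋃ γ ∈ {γ : Γ | ℓ γ ≤ k α}, (fun x => γ • x) '' B) ⊆ ExhAux.ex (SB K) B := by
      intro z hz
      simp only [Set.mem_iUnion, Set.mem_setOf_eq] at hz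
      obtain ⟨γ', hγ', hzin⟩ := hz
      exact Set.mem_biUnion ((hSBmem K γ').2 (hγ'.trans hK)) hzin
    calc (1 + CE α) * ν B ≤ (1 + ENNReal.ofReal (c α)) * ν B :=
          mul_le_mul_left (add_le_add le_rfl (min_le_left _ _)) _
    _ < ν ((⋃ γ ∈ {γ : Γ | ℓ γ ≤ k α}, (fun x => γ • x) '' B) ∩ Y) := h1
    _ ≤ ν (ExhAux.ex (SB K) B ∩ Y) := measure_mono (Set.inter_subset_inter_left _ h2)
  -- the recursion
  set Inv : ℕ → (Set X × ℕ × ℕ) → Prop := fun n q =>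
    MeasurableSet q.1 ∧ q.1 ⊆ E q.2.2 ∧ mcond q.2.1 q.2.2 ∧
      ν (Y \ q.1) ≤ (2⁻¹:ℝ≥0∞)^n * ν Y ∧ 0 < ν q.1 ∧
      ∃ c₁ : ℝ≥0∞, 0 < c₁ ∧ c₁ ≤ 1 ∧ ExhAux.UExp ν (SB q.2.1) q.1 c₁ (ν Y / 2) with hInvdef
  have hbase : ∃ q, Inv 0 q := by
    obtain ⟨D', K', m', h1, h2, h3, h4, h5, h6, hcc⟩ :=
      ExhAux.buildStep ν Y hYpos hYfin' SB hSBmono hSB1 E hEmeas hEY hEmono hEsmall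
        CE k hCEp hbigF mcond hmcond 0 ∅ 0 0 MeasurableSet.empty (Set.empty_subset _)
        ⟨1, one_pos, le_rfl, ExhAux.UExp_empty ν _ _ _⟩
    exact ⟨(D', K', m'), h1, h3, h4, h5, h6, hcc⟩
  have hstep : ∀ n q, Inv n q → ∃ q', Inv (n+1) q' ∧ q.1 ⊆ q'.1 := by
    rintro n ⟨D, K, m⟩ ⟨h1, h2, h3, h4, h5, h6⟩
    obtain ⟨D', K', m', g1, g2, g3, g4, g5, g6, gc⟩ :=
      ExhAux.buildStep ν Y hYpos hYfin' SB hSBmono hSB1 E hEmeas hEY hEmono hEsmall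
        CE k hCEp hbigF mcond hmcond (n+1) D K m h1 h2 h6
    exact ⟨(D', K', m'), ⟨g1, g3, g4, g5, g6, gc⟩, g2⟩
  obtain ⟨f, hf, hflink⟩ := ExhAux.nat_rec_choice Inv (fun a b => a.1 ⊆ b.1) hbase hstep
  -- good bounds on each domain
  have hgoodD : ∀ n, ∀ x ∈ (f n).1, ∀ s ∈ SB (f n).2.1,
      (((T (f n).2.2 : ℕ) : ℝ≥0∞))⁻¹ ≤ rnd ν s x ∧ rnd ν s x ≤ ((T (f n).2.2 : ℕ) : ℝ≥0∞) := by
    intro n x hx s hs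
    obtain ⟨h1, h2, h3, h4, h5, h6⟩ := hf n
    obtain ⟨j, hj, rfl⟩ := h3 s hs
    exact ((hEgood _ (h2 hx)).2 j hj)
  refine ⟨fun n => (f n).1, fun n => SB (f n).2.1, fun n => ((T (f n).2.2 : ℕ) : ℝ),
    ?_, ?_, ?_, ?_, ?_, ?_, ?_⟩
  · exact monotone_nat_of_le_succ hflink
  · exact fun n => ((hf n).2.1).trans (hEY _)
  · -- exhaustion
    have hb : ∀ n, ν (Y \ ⋃ n, (f n).1) ≤ (2⁻¹:ℝ≥0∞)^n * ν Y := by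
      intro n
      refine le_trans (measure_mono (Set.diff_subset_diff_right (Set.subset_iUnion _ n)))
        (hf n).2.2.2.1
    by_contra h0
    have hpos : ν (Y \ ⋃ n, (f n).1) ≠ 0 := h0
    have hdiv : ν (Y \ ⋃ n, (f n).1) / ν Y ≠ 0 := by
      simp only [ne_eq, ENNReal.div_eq_zero_iff, not_or]
      exact ⟨hpos, hYfin'⟩
    obtain ⟨n, hn⟩ := ENNReal.exists_inv_two_pow_lt hdiv
    have hcon : ν (Y \ ⋃ n, (f n).1) < ν (Y \ ⋃ n, (f n).1) := by
      calc ν (Y \ ⋃ n, (f n).1) ≤ (2⁻¹:ℝ≥0∞)^n * ν Y := hb n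
      _ < (ν (Y \ ⋃ n, (f n).1) / ν Y) * ν Y :=
          (ENNReal.mul_lt_mul_iff_left hYpos.ne' hYfin').2 hn
      _ = ν (Y \ ⋃ n, (f n).1) := ENNReal.div_mul_cancel hYpos.ne' hYfin'
    exact lt_irrefl _ hcon
  · intro n
    exact ⟨(hf n).1, (hf n).2.2.2.2.1,
      lt_of_le_of_lt (measure_mono (((hf n).2.1).trans (hEY _))) (lt_top_iff_ne_top.2 hYfin')⟩
  · exact fun n => ⟨hSBinv _, hSB1 _⟩
  · -- Markov expansion
    intro n
    obtain ⟨h1, h2, h3, h4, h5, c₁, hc₁0, hc₁1, hUE⟩ := hf n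
    refine ExhAux.markov ν (SB (f n).2.1) ((T (f n).2.2 : ℕ) : ℝ≥0∞) (f n).1
      hmeas hmcp Y hYfin' (hSB1 _) (hSBinv _) ?_ (ENNReal.natCast_ne_top _)
      h1 (h2.trans (hEY _)) (hgoodD n) c₁ hc₁0 hc₁1 hUE
    exact_mod_cast hT1 _
  · -- the Θ bounds
    intro n
    have h1T : (1:ℝ) ≤ ((T (f n).2.2 : ℕ) : ℝ) := by exact_mod_cast hT1 _
    refine ⟨h1T, fun y hy s hs _ => ?_⟩
    obtain ⟨hlow, hup⟩ := hgoodD n y hy s hs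
    constructor
    · refine le_trans (le_of_eq ?_) hlow
      rw [one_div, ENNReal.ofReal_inv_of_pos (lt_of_lt_of_le zero_lt_one h1T),
        ENNReal.ofReal_natCast]
    · refine hup.trans (le_of_eq ?_)
      rw [ENNReal.ofReal_natCast]
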